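/- arXiv:2107.08023 — 3 statements merged into one kernel-verified Lean document; each statement's English description precedes it below -/
import Mathlib

section
/- Let n ≥ 1 and 1 ≤ k ≤ n, and let Z_1,…,Z_n be exchangeable random variables. Then for every s, P(Z_{n-k+1:n} > s) = 1 − Σ_{i=n-k+1}^{n} (−1)^{i−n+k−1} C(n,i) C(i−1,n−k) P(Z_1 ≤ s, …, Z_i ≤ s). -/
open MeasureTheory ProbabilityTheory

/-- `orderStat Z j ω` is the `j`-th smallest value (1-indexed) among `Z 0 ω, …, Z (n-1) ω`. -/
noncomputable def orderStat {Ω : Type*} {n : ℕ} (Z : Fin n → Ω → ℝ) (j : ℕ) (ω : Ω) : ℝ :=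
  ((List.ofFn fun i => Z i ω).mergeSort (fun x y => x ≤ y)).getD (j - 1) 0

-- vanishing alternating identity
lemma alt_vanish (N r : ℕ) (h : r < N) :
    ∑ j ∈ Finset.Icc r N, (-1:ℝ)^(j-r) * (N.choose j) * (j.choose r) = 0 := by
  have h1 : ∀ j ∈ Finset.Icc r N, (-1:ℝ)^(j-r) * (N.choose j) * (j.choose r)
      = (N.choose r : ℝ) * ((-1:ℝ)^(j-r) * ((N-r).choose (j-r))) := by
    intro j hj
    simp only [Finset.mem_Icc] at hj
    have := Nat.choose_mul (n := N) hj.1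
    have : (N.choose j * j.choose r : ℝ) = (N.choose r * (N-r).choose (j-r) : ℕ) := by
      exact_mod_cast congrArg (Nat.cast (R := ℝ)) this
    push_cast at this
    calc (-1:ℝ)^(j-r) * (N.choose j) * (j.choose r)
        = (-1:ℝ)^(j-r) * ((N.choose j : ℝ) * (j.choose r)) := by ring
      _ = (-1:ℝ)^(j-r) * ((N.choose r : ℝ) * ((N-r).choose (j-r))) := by rw [this]
      _ = (N.choose r : ℝ) * ((-1:ℝ)^(j-r) * ((N-r).choose (j-r))) := by ring
  rw [Finset.sum_congr rfl h1, ← Finset.mul_sum]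
  have : ∑ j ∈ Finset.Icc r N, (-1:ℝ)^(j-r) * ((N-r).choose (j-r))
      = ∑ t ∈ Finset.range (N-r+1), (-1:ℝ)^t * ((N-r).choose t) := by
    rw [Finset.sum_bij (fun j _ => j - r)]
    · intro a ha; simp only [Finset.mem_Icc] at ha; simp [Finset.mem_range]; omega
    · intro a ha b hb hab; simp only [Finset.mem_Icc] at *; omega
    · intro b hb; simp only [Finset.mem_range] at hb; exact ⟨b + r, by simp [Finset.mem_Icc]; omega, by omega⟩
    · intro a ha; rfl
  rw [this]
  have key : ∑ t ∈ Finset.range (N-r+1), (-1:ℝ)^t * ((N-r).choose t) = 0 := by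
    have := Int.alternating_sum_range_choose (n := N - r)
    rw [if_neg (by omega)] at this
    exact_mod_cast congrArg (Int.cast (R := ℝ)) this
  rw [key, mul_zero]

lemma key_identity (m N : ℕ) (hm : 1 ≤ m) (hmN : m ≤ N) :
    ∑ i ∈ Finset.Icc m N, (-1:ℝ)^(i-m) * ((i-1).choose (m-1)) * (N.choose i) = 1 := by
  induction N, hmN using Nat.le_induction with
  | base =>
    rw [Finset.Icc_self, Finset.sum_singleton]
    simp
  | succ N hmN ih =>
    have pascal : ∀ i ∈ Finset.Icc m (N+1),
        (-1:ℝ)^(i-m) * ((i-1).choose (m-1)) * ((N+1).choose i)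
        = (-1:ℝ)^(i-m) * ((i-1).choose (m-1)) * (N.choose i)
          + (-1:ℝ)^(i-m) * ((i-1).choose (m-1)) * (N.choose (i-1)) := by
      intro i hi
      simp only [Finset.mem_Icc] at hi
      obtain ⟨i, rfl⟩ : ∃ i', i = i' + 1 := ⟨i - 1, by omega⟩
      rw [Nat.choose_succ_succ]
      push_cast
      ring
    rw [Finset.sum_congr rfl pascal, Finset.sum_add_distrib]
    have e1 : ∑ i ∈ Finset.Icc m (N+1), (-1:ℝ)^(i-m) * ((i-1).choose (m-1)) * (N.choose i)
        = ∑ i ∈ Finset.Icc m N, (-1:ℝ)^(i-m) * ((i-1).choose (m-1)) * (N.choose i) := by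
      rw [show Finset.Icc m (N+1) = insert (N+1) (Finset.Icc m N) by
        ext x; simp [Finset.mem_Icc]; omega]
      rw [Finset.sum_insert (by simp)]
      simp [Nat.choose_eq_zero_of_lt (by omega : N < N + 1)]
    have e2 : ∑ i ∈ Finset.Icc m (N+1), (-1:ℝ)^(i-m) * ((i-1).choose (m-1)) * (N.choose (i-1))
        = ∑ j ∈ Finset.Icc (m-1) N, (-1:ℝ)^(j-(m-1)) * (N.choose j) * (j.choose (m-1)) := by
      rw [Finset.sum_bij (fun i _ => i - 1)]
      · intro a ha; simp only [Finset.mem_Icc] at *; omega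
      · intro a ha b hb hab; simp only [Finset.mem_Icc] at *; omega
      · intro b hb; simp only [Finset.mem_Icc] at hb
        exact ⟨b + 1, by simp [Finset.mem_Icc]; omega, by omega⟩
      · intro a ha
        simp only [Finset.mem_Icc] at ha
        have : a - 1 - (m - 1) = a - m := by omega
        rw [this]; ring
    rw [e1, e2, ih, alt_vanish N (m-1) (by omega), add_zero]

lemma key_identity' (m n N : ℕ) (hm : 1 ≤ m) (hmn : m ≤ n) (hN : N ≤ n) :
    ∑ i ∈ Finset.Icc m n, (-1:ℝ)^(i-m) * ((i-1).choose (m-1)) * (N.choose i)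
      = if m ≤ N then 1 else 0 := by
  by_cases h : m ≤ N
  · rw [if_pos h]
    rw [← Finset.sum_subset (Finset.Icc_subset_Icc_right hN) (fun i hi hni => by
      simp only [Finset.mem_Icc] at hi hni
      rw [Nat.choose_eq_zero_of_lt (show N < i by omega)]
      simp)]
    exact key_identity m N hm h
  · rw [if_neg h]
    apply Finset.sum_eq_zero
    intro i hi
    simp only [Finset.mem_Icc] at hi
    rw [Nat.choose_eq_zero_of_lt (show N < i by omega)]
    simp

lemma countP_ofFn (n : ℕ) (f : Fin n → ℝ) (p : ℝ → Bool) :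
    (List.ofFn f).countP p = (Finset.univ.filter (fun i => p (f i))).card := by
  induction n with
  | zero => simp
  | succ n ih =>
    rw [List.ofFn_succ, List.countP_cons, ih (fun i => f i.succ)]
    rw [Fin.card_filter_univ_succ' (p := fun i => p (f i) = true)]
    rcases h : p (f 0) <;> simp [h, Nat.add_comm]

lemma sorted_getD_le_iff : ∀ (l : List ℝ), l.Pairwise (· ≤ ·) → ∀ (x : ℝ) (j : ℕ), j < l.length →
    (l.getD j 0 ≤ x ↔ j < l.countP (fun a => a ≤ x)) := by
  intro l
  induction l with
  | nil => intro _ x j hj; simp at hj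
  | cons a l ih =>
    intro hs x j hj
    rw [List.pairwise_cons] at hs
    obtain ⟨ha, hl⟩ := hs
    rw [List.countP_cons]
    by_cases hax : a ≤ x
    · have hd : (if (decide (a ≤ x)) = true then 1 else 0) = 1 := by simp [hax]
      rw [hd]
      cases j with
      | zero => simp [hax]
      | succ j =>
        simp only [List.getD_cons_succ]
        rw [ih hl x j (by simpa using hj)]
        omega
    · have hc : l.countP (fun a => a ≤ x) = 0 := by
        rw [List.countP_eq_zero]
        intro b hb
        simp only [decide_eq_true_eq]
        exact fun hbx => hax (le_trans (ha b hb) hbx)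
      have hd : (if (decide (a ≤ x)) = true then 1 else 0) = 0 := by simp [hax]
      rw [hd, hc]
      cases j with
      | zero => simpa using hax
      | succ j =>
        simp only [List.getD_cons_succ]
        constructor
        · intro h
          exfalso
          have hjl : j < l.length := by simpa using hj
          have : l.getD j 0 ∈ l := by
            rw [List.getD_eq_getElem _ _ hjl]
            exact List.getElem_mem hjl
          exact hax (le_trans (ha _ this) h)
        · simp

lemma exch_eq {Ω : Type*} [MeasurableSpace Ω] (P : Measure Ω)
    (n : ℕ) (Z : Fin n → Ω → ℝ) (hZm : ∀ i, Measurable (Z i))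
    (hexch : ∀ σ : Equiv.Perm (Fin n),
      Measure.map (fun ω => fun i => Z (σ i) ω) P = Measure.map (fun ω => fun i => Z i ω) P)
    (s : ℝ) (i : ℕ) (hi : i ≤ n) (T : Finset (Fin n)) (hT : T.card = i) :
    P {ω | ∀ j ∈ T, Z j ω ≤ s} = P {ω | ∀ j : Fin n, (j : ℕ) < i → Z j ω ≤ s} := by
  classical
  set Ti : Finset (Fin n) := Finset.univ.filter (fun j : Fin n => (j : ℕ) < i) with hTi
  have hTicard : Ti.card = i := by
    rw [Finset.card_bij' (fun (j : Fin n) (_ : j ∈ Ti) => (j : ℕ))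
      (fun (a : ℕ) (ha : a ∈ Finset.range i) => (⟨a, lt_of_lt_of_le (Finset.mem_range.mp ha) hi⟩ : Fin n))]
    · exact Finset.card_range i
    · intro a ha; simp only [hTi, Finset.mem_filter, Finset.mem_univ, true_and] at ha
      simpa using ha
    · intro a ha; simp [hTi]
      simpa using Finset.mem_range.mp ha
    · intro a ha; rfl
    · intro a ha; rfl
  have hcc : Ti.card = T.card := by rw [hTicard, hT]
  let e : {x // x ∈ Ti} ≃ {x // x ∈ T} := Finset.equivOfCardEq hcc
  let σ : Equiv.Perm (Fin n) := e.extendSubtype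
  have hσ : ∀ j : Fin n, j ∈ Ti ↔ σ j ∈ T := by
    intro j
    constructor
    · intro hj; exact e.extendSubtype_mem j hj
    · intro hj
      by_contra hmem
      have := e.extendSubtype_not_mem j hmem
      exact this hj
  -- measurable set in the product
  set S : Set (Fin n → ℝ) := {f | ∀ j : Fin n, (j : ℕ) < i → f j ≤ s} with hS
  have hSm : MeasurableSet S := by
    have : S = ⋂ (j : Fin n) (_ : (j : ℕ) < i), (fun f : Fin n → ℝ => f j) ⁻¹' Set.Iic s := by
      ext f; simp [hS]
    rw [this]
    exact MeasurableSet.iInter fun j => MeasurableSet.iInter fun _ =>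
      (measurable_pi_apply j) measurableSet_Iic
  have hm1 : Measurable (fun ω => fun j : Fin n => Z (σ j) ω) :=
    measurable_pi_lambda _ fun j => hZm (σ j)
  have hm2 : Measurable (fun ω => fun j : Fin n => Z j ω) :=
    measurable_pi_lambda _ fun j => hZm j
  have happ := congrArg (fun μ => μ S) (hexch σ)
  rw [Measure.map_apply hm1 hSm, Measure.map_apply hm2 hSm] at happ
  have hpre1 : (fun ω => fun j : Fin n => Z (σ j) ω) ⁻¹' S = {ω | ∀ j ∈ T, Z j ω ≤ s} := by
    ext ω
    simp only [Set.mem_preimage, hS, Set.mem_setOf_eq]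
    constructor
    · intro h j hj
      have h2 : σ⁻¹ j ∈ Ti := by
        rw [hσ (σ⁻¹ j)]
        simpa using hj
      have h3 : ((σ⁻¹ j : Fin n) : ℕ) < i := by
        simpa [hTi] using h2
      have := h (σ⁻¹ j) h3
      simpa using this
    · intro h j hj
      apply h
      rw [← hσ j]
      simp [hTi, hj]
  have hpre2 : (fun ω => fun j : Fin n => Z j ω) ⁻¹' S = {ω | ∀ j : Fin n, (j : ℕ) < i → Z j ω ≤ s} := by
    ext ω; simp [hS]
  rw [hpre1, hpre2] at happ
  exact happ

theorem reliability_k_out_of_n_exchangeable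
    {Ω : Type*} [MeasurableSpace Ω] (P : Measure Ω) [IsProbabilityMeasure P]
    (n k : ℕ) (hn : 1 ≤ n) (hk1 : 1 ≤ k) (hkn : k ≤ n)
    (Z : Fin n → Ω → ℝ) (hZm : ∀ i, Measurable (Z i))
    (hexch : ∀ σ : Equiv.Perm (Fin n),
      Measure.map (fun ω => fun i => Z (σ i) ω) P = Measure.map (fun ω => fun i => Z i ω) P)
    (s : ℝ) :
    (P {ω | s < orderStat Z (n - k + 1) ω}).toReal
      = 1 - ∑ i ∈ Finset.Icc (n - k + 1) n,
          (-1 : ℝ) ^ (i - (n - k + 1)) * (n.choose i) * ((i - 1).choose (n - k)) *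
            (P {ω | ∀ j : Fin n, (j : ℕ) < i → Z j ω ≤ s}).toReal := by
  classical
  set m : ℕ := n - k + 1 with hm
  have hm1 : 1 ≤ m := by omega
  have hmn : m ≤ n := by omega
  -- counting function
  set N : Ω → ℕ := fun ω => (Finset.univ.filter fun i => Z i ω ≤ s).card with hN
  have hNn : ∀ ω, N ω ≤ n := by
    intro ω
    calc N ω ≤ (Finset.univ : Finset (Fin n)).card := Finset.card_filter_le _ _
    _ = n := by simp
  -- Step A : event identification
  have hstepA : {ω | s < orderStat Z m ω} = {ω | m ≤ N ω}ᶜ := by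
    ext ω
    simp only [Set.mem_setOf_eq, Set.mem_compl_iff, not_le]
    set l : List ℝ := List.ofFn (fun i => Z i ω) with hl
    set sl : List ℝ := l.mergeSort (fun x y => x ≤ y) with hsl
    have hsorted : sl.Pairwise (· ≤ ·) := List.pairwise_mergeSort' _ l
    have hlen : sl.length = n := by
      rw [hsl, List.length_mergeSort, hl, List.length_ofFn]
    have hcount : sl.countP (fun a => a ≤ s) = N ω := by
      rw [hsl, (List.mergeSort_perm l _).countP_eq, hl, countP_ofFn]
      apply congrArg
      apply Finset.filter_congr
      intro i _
      simp
    have hj : m - 1 < sl.length := by omega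
    have key := sorted_getD_le_iff sl hsorted s (m - 1) hj
    have : orderStat Z m ω = sl.getD (m-1) 0 := rfl
    rw [this]
    rw [← not_le, key, hcount]
    constructor
    · intro h; omega
    · intro h; omega
  rw [hstepA]
  -- the family of events
  set A : Finset (Fin n) → Set Ω := fun T => {ω | ∀ j ∈ T, Z j ω ≤ s} with hA
  have hAm : ∀ T, MeasurableSet (A T) := by
    intro T
    have : A T = ⋂ j ∈ T, (Z j) ⁻¹' Set.Iic s := by
      ext ω; simp [hA]
    rw [this]
    exact MeasurableSet.biInter (Set.to_countable _)
      (fun j _ => (hZm j) measurableSet_Iic)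
  have hmemA : ∀ T ω, ω ∈ A T ↔ T ⊆ Finset.univ.filter (fun i => Z i ω ≤ s) := by
    intro T ω
    simp only [hA, Set.mem_setOf_eq, Finset.subset_iff, Finset.mem_filter, Finset.mem_univ,
      true_and]
  have hBm : MeasurableSet {ω | m ≤ N ω} := by
    have : {ω | m ≤ N ω} = ⋃ T ∈ Finset.powersetCard m (Finset.univ : Finset (Fin n)), A T := by
      ext ω
      simp only [Set.mem_setOf_eq, Set.mem_iUnion]
      constructor
      · intro h
        obtain ⟨T, hTsub, hTcard⟩ := Finset.exists_subset_card_eq h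
        exact ⟨T, ⟨Finset.mem_powersetCard.mpr ⟨Finset.subset_univ T, hTcard⟩,
          (hmemA T ω).mpr hTsub⟩⟩
      · rintro ⟨T, hT, hωT⟩
        rw [Finset.mem_powersetCard] at hT
        calc m = T.card := hT.2.symm
        _ ≤ N ω := Finset.card_le_card ((hmemA T ω).mp hωT)
    rw [this]
    exact MeasurableSet.biUnion (Set.to_countable _) (fun T _ => hAm T)
  -- pointwise inclusion-exclusion identity
  have hpoint : ∀ ω, Set.indicator {ω | m ≤ N ω} (1 : Ω → ℝ) ω
      = ∑ i ∈ Finset.Icc m n, ∑ T ∈ Finset.powersetCard i (Finset.univ : Finset (Fin n)),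
          ((-1:ℝ)^(i-m) * ((i-1).choose (m-1))) * Set.indicator (A T) (1 : Ω → ℝ) ω := by
    intro ω
    have hinner : ∀ i, ∑ T ∈ Finset.powersetCard i (Finset.univ : Finset (Fin n)),
        Set.indicator (A T) (1 : Ω → ℝ) ω = ((N ω).choose i : ℝ) := by
      intro i
      have : ∀ T ∈ Finset.powersetCard i (Finset.univ : Finset (Fin n)),
          Set.indicator (A T) (1 : Ω → ℝ) ω = if ω ∈ A T then 1 else 0 := by
        intro T _
        simp [Set.indicator_apply]
      rw [Finset.sum_congr rfl this, Finset.sum_boole]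
      have : Finset.filter (fun T => ω ∈ A T)
            (Finset.powersetCard i (Finset.univ : Finset (Fin n)))
          = Finset.powersetCard i (Finset.univ.filter (fun j => Z j ω ≤ s)) := by
        ext T
        simp only [Finset.mem_filter, Finset.mem_powersetCard]
        rw [hmemA T ω]
        constructor
        · rintro ⟨⟨_, hc⟩, hsub⟩; exact ⟨hsub, hc⟩
        · rintro ⟨hsub, hc⟩; exact ⟨⟨Finset.subset_univ T, hc⟩, hsub⟩
      rw [this, Finset.card_powersetCard]
    have hsum : ∑ i ∈ Finset.Icc m n, ∑ T ∈ Finset.powersetCard i (Finset.univ : Finset (Fin n)),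
        ((-1:ℝ)^(i-m) * ((i-1).choose (m-1))) * Set.indicator (A T) (1 : Ω → ℝ) ω
        = ∑ i ∈ Finset.Icc m n, (-1:ℝ)^(i-m) * ((i-1).choose (m-1)) * ((N ω).choose i) := by
      apply Finset.sum_congr rfl
      intro i _
      rw [← Finset.mul_sum, hinner i]
    rw [hsum, key_identity' m n (N ω) hm1 hmn (hNn ω)]
    simp [Set.indicator_apply]
  -- integrability
  have hint : ∀ T : Finset (Fin n), Integrable (Set.indicator (A T) (1 : Ω → ℝ)) P :=
    fun T => (integrable_const (1:ℝ)).indicator (hAm T)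
  -- integrate the pointwise identity
  have hintegral : (P {ω | m ≤ N ω}).toReal
      = ∑ i ∈ Finset.Icc m n, ∑ T ∈ Finset.powersetCard i (Finset.univ : Finset (Fin n)),
          ((-1:ℝ)^(i-m) * ((i-1).choose (m-1))) * (P (A T)).toReal := by
    have h1 : (P {ω | m ≤ N ω}).toReal
        = ∫ ω, Set.indicator {ω | m ≤ N ω} (1 : Ω → ℝ) ω ∂P := by
      rw [integral_indicator_one hBm]; rfl
    rw [h1]
    rw [integral_congr_ae (Filter.Eventually.of_forall hpoint)]
    rw [integral_finset_sum _ (fun i _ => integrable_finset_sum _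
      (fun T _ => ((hint T).const_mul _)))]
    apply Finset.sum_congr rfl
    intro i _
    rw [integral_finset_sum _ (fun T _ => ((hint T).const_mul _))]
    apply Finset.sum_congr rfl
    intro T _
    rw [integral_const_mul, integral_indicator_one (hAm T)]; rfl
  -- apply exchangeability
  have hexchsum : ∀ i ∈ Finset.Icc m n,
      ∑ T ∈ Finset.powersetCard i (Finset.univ : Finset (Fin n)),
          ((-1:ℝ)^(i-m) * ((i-1).choose (m-1))) * (P (A T)).toReal
      = (-1:ℝ)^(i-m) * ((i-1).choose (m-1)) * (n.choose i)
          * (P {ω | ∀ j : Fin n, (j : ℕ) < i → Z j ω ≤ s}).toReal := by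
    intro i hi
    simp only [Finset.mem_Icc] at hi
    have : ∀ T ∈ Finset.powersetCard i (Finset.univ : Finset (Fin n)),
        ((-1:ℝ)^(i-m) * ((i-1).choose (m-1))) * (P (A T)).toReal
        = ((-1:ℝ)^(i-m) * ((i-1).choose (m-1)))
            * (P {ω | ∀ j : Fin n, (j : ℕ) < i → Z j ω ≤ s}).toReal := by
      intro T hT
      rw [Finset.mem_powersetCard] at hT
      rw [exch_eq P n Z hZm hexch s i hi.2 T hT.2]
    rw [Finset.sum_congr rfl this, Finset.sum_const, Finset.card_powersetCard, Finset.card_univ,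
      Fintype.card_fin, nsmul_eq_mul]
    ring
  -- complement and final assembly
  have hcompl : (P ({ω | m ≤ N ω}ᶜ)).toReal = 1 - (P {ω | m ≤ N ω}).toReal := by
    rw [measure_compl hBm (measure_ne_top P _), measure_univ]
    rw [ENNReal.toReal_sub_of_le prob_le_one ENNReal.one_ne_top]
    simp
  rw [hcompl, hintegral, Finset.sum_congr rfl hexchsum]
  congr 1
  apply Finset.sum_congr rfl
  intro i _
  have h1 : m - 1 = n - k := by omega
  rw [h1]
  ring
end

section
/- Let Z_1,…,Z_n be exchangeable random variables, let t be real, x ≥ 0, and 1 ≤ i ≤ n−1. Then P(t < Z_1 ≤ t+x, …, t < Z_i ≤ t+x, Z_{i+1} > t+x, …, Z_n > t+x) = P(Z_1 ≤ t+x, …, Z_i ≤ t+x) − Σ_{j=1}^{i} (−1)^{j+1} C(i,j) P(Z_1 ≤ t, …, Z_j ≤ t, Z_{j+1} ≤ t+x, …, Z_i ≤ t+x) − Σ_{j=1}^{n−i} (−1)^{j+1} C(n−i,j) P(Z_1 ≤ t+x, …, Z_{i+j} ≤ t+x) + Σ_{j=1}^{i} Σ_{m=1}^{n−i} (−1)^{j+m}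 C(i,j) C(n−i,m) P(Z_1 ≤ t, …, Z_j ≤ t, Z_{j+1} ≤ t+x, …, Z_{i+m} ≤ t+x). -/
open MeasureTheory ProbabilityTheory

/-- The event `{Z_1 ≤ t, …, Z_j ≤ t, Z_{j+1} ≤ s, …, Z_i ≤ s}` (1-indexed components). -/
def cdfEvent {Ω : Type*} {n : ℕ} (Z : Fin n → Ω → ℝ) (j i : ℕ) (t s : ℝ) : Set Ω :=
  {ω | ∀ l : Fin n, ((l : ℕ) < j → Z l ω ≤ t) ∧ (j ≤ (l : ℕ) → (l : ℕ) < i → Z l ω ≤ s)}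

section AuxIE

open Finset

/-- Two tuples whose entry lists are permutations of each other differ by a permutation. -/
lemma exists_perm_comp_aux {α : Type*} [LinearOrder α] {n : ℕ} {f g : Fin n → α}
    (h : List.Perm (List.ofFn f) (List.ofFn g)) : ∃ σ : Equiv.Perm (Fin n), f ∘ σ = g := by
  have h1 : f ∘ Tuple.sort f = g ∘ Tuple.sort g := by
    rw [← List.ofFn_inj]
    exact List.Perm.eq_of_sortedLE
      (Tuple.monotone_sort f).sortedLE_ofFn (Tuple.monotone_sort g).sortedLE_ofFn
      (((Tuple.sort f).ofFn_comp_perm f).trans (h.trans ((Tuple.sort g).ofFn_comp_perm g).symm))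
  refine ⟨((Tuple.sort g)⁻¹ : Equiv.Perm (Fin n)).trans (Tuple.sort f), ?_⟩
  funext l
  have := congrFun h1 ((Tuple.sort g)⁻¹ l)
  simpa using this

lemma count_ofFn_aux {α : Type*} [DecidableEq α] {n : ℕ} (f : Fin n → α) (a : α) :
    (List.ofFn f).count a = (Finset.univ.filter (fun l => f l = a)).card := by
  have h := Fin.card_filter_univ_eq_vector_get_eq_count a (List.Vector.ofFn f)
  simpa using h.symm

lemma card_filter_val_lt {n j : ℕ} (h : j ≤ n) :
    (Finset.univ.filter (fun l : Fin n => (l : ℕ) < j)).card = j := by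
  rcases eq_or_lt_of_le h with rfl | hj
  · rw [Finset.filter_true_of_mem (fun l _ => l.isLt)]
    simp
  · have : (Finset.univ.filter (fun l : Fin n => (l : ℕ) < j)) = Finset.Iio ⟨j, hj⟩ := by
      ext l
      simp [Fin.lt_def]
    rw [this, Fin.card_Iio]

/-- Label function determined by a nested pair of finsets. -/
def labOf {n : ℕ} (A B : Finset (Fin n)) : Fin n → Fin 3 :=
  fun l => if l ∈ A then 0 else if l ∈ B then 1 else 2

/-- Canonical label function: first `j` labels `0`, next `k - j` labels `1`, rest `2`. -/
def labC (n j k : ℕ) : Fin n → Fin 3 :=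
  fun l => if (l : ℕ) < j then 0 else if (l : ℕ) < k then 1 else 2

lemma labOf_perm {n : ℕ} (A B : Finset (Fin n)) (hAB : A ⊆ B) :
    List.Perm (List.ofFn (labOf A B)) (List.ofFn (labC n A.card B.card)) := by
  have hBn : B.card ≤ n := le_trans (card_le_card (subset_univ B)) (by simp)
  have hABc : A.card ≤ B.card := card_le_card hAB
  rw [List.perm_iff_count]
  intro a
  rw [count_ofFn_aux, count_ofFn_aux]
  have ha : a = 0 ∨ a = 1 ∨ a = 2 := by omega
  rcases ha with rfl | rfl | rfl
  · have h1 : Finset.univ.filter (fun l => labOf A B l = 0) = A := by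
      ext l
      by_cases hA : l ∈ A <;> by_cases hB : l ∈ B <;> simp [labOf, hA, hB]
    have h2 : Finset.univ.filter (fun l => labC n A.card B.card l = 0)
        = Finset.univ.filter (fun l : Fin n => (l : ℕ) < A.card) := by
      ext l
      by_cases h1 : (l : ℕ) < A.card <;> by_cases h2 : (l : ℕ) < B.card <;>
        simp [labC, h1, h2]
    rw [h1, h2, card_filter_val_lt (le_trans hABc hBn)]
  · have h1 : Finset.univ.filter (fun l => labOf A B l = 1) = B \ A := by
      ext l
      by_cases hA : l ∈ A <;> by_cases hB : l ∈ B <;> simp only [mem_filter, mem_univ, true_and, mem_sdiff] <;> simp [labOf, hA, hB]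
    have h2 : Finset.univ.filter (fun l => labC n A.card B.card l = 1)
        = Finset.univ.filter (fun l : Fin n => (l : ℕ) < B.card)
          \ Finset.univ.filter (fun l : Fin n => (l : ℕ) < A.card) := by
      ext l
      by_cases h1 : (l : ℕ) < A.card <;> by_cases h2 : (l : ℕ) < B.card <;>
        simp only [mem_filter, mem_univ, true_and, mem_sdiff] <;> simp [labC, h1, h2] <;> omega
    have hsub : Finset.univ.filter (fun l : Fin n => (l : ℕ) < A.card)
        ⊆ Finset.univ.filter (fun l : Fin n => (l : ℕ) < B.card) := by
      intro l hl
      simp only [mem_filter, mem_univ, true_and] at hl ⊢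
      omega
    rw [h1, h2, card_sdiff_of_subset hAB, card_sdiff_of_subset hsub,
      card_filter_val_lt hBn, card_filter_val_lt (le_trans hABc hBn)]
  · have h1 : Finset.univ.filter (fun l => labOf A B l = 2) = Finset.univ \ B := by
      ext l
      by_cases hA : l ∈ A <;> by_cases hB : l ∈ B <;>
        simp only [mem_filter, mem_univ, true_and, mem_sdiff] <;>
        simp only [labOf, hA, hB, if_true, if_false, mem_filter, mem_univ, true_and,
          mem_sdiff] <;> first | (exact absurd (hAB hA) hB) | decide | simp [mem_filter, hA, hB]
    have h2 : Finset.univ.filter (fun l => labC n A.card B.card l = 2)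
        = Finset.univ \ Finset.univ.filter (fun l : Fin n => (l : ℕ) < B.card) := by
      ext l
      by_cases h1 : (l : ℕ) < A.card <;> by_cases h2 : (l : ℕ) < B.card <;>
        simp only [mem_filter, mem_univ, true_and, mem_sdiff] <;> simp [labC, h1, h2] <;> omega
    rw [h1, h2, card_sdiff_of_subset (subset_univ _), card_sdiff_of_subset (filter_subset _ _),
      card_filter_val_lt hBn, card_univ, Fintype.card_fin]

/-- The event determined by a label function. -/
def labEvent {Ω : Type*} {n : ℕ} (Z : Fin n → Ω → ℝ) (lab : Fin n → Fin 3) (t s : ℝ) : Set Ω :=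
  {ω | ∀ l, (lab l = 0 → Z l ω ≤ t) ∧ (lab l = 1 → Z l ω ≤ s)}

lemma measurableSet_labEvent {Ω : Type*} [MeasurableSpace Ω] {n : ℕ} (Z : Fin n → Ω → ℝ)
    (hZm : ∀ l, Measurable (Z l)) (lab : Fin n → Fin 3) (t s : ℝ) :
    MeasurableSet (labEvent Z lab t s) := by
  have h : labEvent Z lab t s
      = ⋂ l, ({ω | lab l = 0 → Z l ω ≤ t} ∩ {ω | lab l = 1 → Z l ω ≤ s}) := by
    ext ω
    simp [labEvent, Set.mem_iInter, forall_and]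
  rw [h]
  refine MeasurableSet.iInter fun l => MeasurableSet.inter ?_ ?_
  · by_cases h0 : lab l = 0
    · simp only [h0, forall_true_left]
      exact (hZm l) measurableSet_Iic
    · simp [h0]
  · by_cases h1 : lab l = 1
    · simp only [h1, forall_true_left]
      exact (hZm l) measurableSet_Iic
    · simp [h1]

lemma labEvent_perm_eq {Ω : Type*} [MeasurableSpace Ω] (P : Measure Ω)
    {n : ℕ} (Z : Fin n → Ω → ℝ) (hZm : ∀ l, Measurable (Z l))
    (hexch : ∀ σ : Equiv.Perm (Fin n),
      Measure.map (fun ω => fun i => Z (σ i) ω) P = Measure.map (fun ω => fun i => Z i ω) P)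
    (lab : Fin n → Fin 3) (σ : Equiv.Perm (Fin n)) (t s : ℝ) :
    P (labEvent Z (lab ∘ σ) t s) = P (labEvent Z lab t s) := by
  set D : Set (Fin n → ℝ) := {v | ∀ l, (lab l = 0 → v l ≤ t) ∧ (lab l = 1 → v l ≤ s)} with hDdef
  have hD : MeasurableSet D := by
    have := measurableSet_labEvent (fun l (v : Fin n → ℝ) => v l)
      (fun l => measurable_pi_apply l) lab t s
    exact this
  have hW : Measurable (fun ω => fun l => Z l ω) := measurable_pi_lambda _ hZm
  have hWσ : Measurable (fun ω => fun l => Z (σ⁻¹ l) ω) :=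
    measurable_pi_lambda _ (fun l => hZm _)
  have h1 : labEvent Z (lab ∘ σ) t s = (fun ω => fun l => Z (σ⁻¹ l) ω) ⁻¹' D := by
    ext ω
    simp only [labEvent, Set.mem_setOf_eq, Set.mem_preimage, hDdef, Function.comp]
    constructor
    · intro h m
      simpa using h (σ⁻¹ m)
    · intro h l
      simpa using h (σ l)
  have h2 : labEvent Z lab t s = (fun ω => fun l => Z l ω) ⁻¹' D := rfl
  rw [h1, h2, ← Measure.map_apply hWσ hD, ← Measure.map_apply hW hD, hexch σ⁻¹]

lemma cdfEvent_eq_labEvent {Ω : Type*} {n : ℕ} (Z : Fin n → Ω → ℝ) (j k : ℕ) (t s : ℝ) :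
    cdfEvent Z j k t s = labEvent Z (labC n j k) t s := by
  ext ω
  simp only [cdfEvent, labEvent, Set.mem_setOf_eq, labC]
  refine forall_congr' fun l => ?_
  by_cases h1 : (l : ℕ) < j
  · simp [h1, Nat.not_le.mpr h1]
  · by_cases h2 : (l : ℕ) < k <;> simp [h1, h2, Nat.le_of_not_lt h1]

lemma key_expand {Ω : Type*} {n : ℕ} (Z : Fin n → Ω → ℝ) (i : ℕ) (t s : ℝ) (hts : t ≤ s)
    (ω : Ω) :
    Set.indicator {ω : Ω | (∀ l : Fin n, (l : ℕ) < i → t < Z l ω ∧ Z l ω ≤ s)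
        ∧ (∀ l : Fin n, i ≤ (l : ℕ) → s < Z l ω)} (fun _ => (1 : ℝ)) ω
      = ∑ S ∈ (Finset.univ : Finset (Fin n)).powerset, (-1 : ℝ) ^ S.card *
          Set.indicator (labEvent Z
              (labOf ((Finset.univ.filter fun l : Fin n => (l : ℕ) < i) ∩ S)
                ((Finset.univ.filter fun l : Fin n => (l : ℕ) < i) ∪ S)) t s)
            (fun _ => (1 : ℝ)) ω := by
  classical
  set lo : Finset (Fin n) := Finset.univ.filter fun l : Fin n => (l : ℕ) < i with hlo
  set ct : Fin n → Prop :=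
    fun l => ((l : ℕ) < i ∧ Z l ω ≤ t) ∨ (¬ (l : ℕ) < i ∧ Z l ω ≤ s) with hct
  set cg : Fin n → Prop := fun l => ((l : ℕ) < i → Z l ω ≤ s) with hcg
  have hcond : (∀ l ∈ (Finset.univ : Finset (Fin n)),
        (((l : ℕ) < i → t < Z l ω ∧ Z l ω ≤ s) ∧ (¬ (l : ℕ) < i → s < Z l ω)))
      ↔ ((∀ l : Fin n, (l : ℕ) < i → t < Z l ω ∧ Z l ω ≤ s)
          ∧ (∀ l : Fin n, i ≤ (l : ℕ) → s < Z l ω)) := by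
    simp only [Finset.mem_univ, true_implies]
    rw [forall_and]
    constructor
    · rintro ⟨h1, h2⟩
      exact ⟨h1, fun l hl => h2 l (Nat.not_lt.mpr hl)⟩
    · rintro ⟨h1, h2⟩
      exact ⟨h1, fun l hl => h2 l (Nat.not_lt.mp hl)⟩
  have hmain : ∏ l : Fin n, ((if ct l then (-1 : ℝ) else 0) + (if cg l then 1 else 0))
      = Set.indicator {ω : Ω | (∀ l : Fin n, (l : ℕ) < i → t < Z l ω ∧ Z l ω ≤ s)
          ∧ (∀ l : Fin n, i ≤ (l : ℕ) → s < Z l ω)} (fun _ => (1 : ℝ)) ω := by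
    have hfac : ∀ l : Fin n, ((if ct l then (-1 : ℝ) else 0) + (if cg l then 1 else 0))
        = (if (((l : ℕ) < i → t < Z l ω ∧ Z l ω ≤ s) ∧ (¬ (l : ℕ) < i → s < Z l ω))
            then (1 : ℝ) else 0) := by
      intro l
      rcases le_or_gt (Z l ω) t with hzt | hzt
      · rcases le_or_gt (Z l ω) s with hzs | hzs
        · by_cases h : (l : ℕ) < i <;>
            simp [hct, hcg, h, hzt, hzs, not_lt.mpr hzt, not_lt.mpr hzs] <;>
            simp [Nat.not_lt.mp h]
        · linarith
      · rcases le_or_gt (Z l ω) s with hzs | hzs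
        · by_cases h : (l : ℕ) < i <;>
            simp [hct, hcg, h, hzs, hzt, not_le.mpr hzt, not_lt.mpr hzs] <;>
            simp [Nat.not_lt.mp h]
        · by_cases h : (l : ℕ) < i <;>
            simp [hct, hcg, h, hzs, hzt, not_le.mpr hzt, not_le.mpr hzs] <;>
            simp [Nat.not_lt.mp h]
    rw [Finset.prod_congr rfl (fun l _ => hfac l)]
    simp only [Finset.prod_boole]
    by_cases hw : ω ∈ {ω : Ω | (∀ l : Fin n, (l : ℕ) < i → t < Z l ω ∧ Z l ω ≤ s)
        ∧ (∀ l : Fin n, i ≤ (l : ℕ) → s < Z l ω)}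
    · rw [Set.indicator_of_mem hw, if_pos (hcond.mpr hw)]
    · rw [Set.indicator_of_notMem hw, if_neg (fun hc => hw (hcond.mp hc))]
  rw [← hmain, Finset.prod_add]
  refine Finset.sum_congr rfl fun S _ => ?_
  have hiff : (∀ l : Fin n, (l ∈ S → ct l) ∧ (l ∈ Finset.univ \ S → cg l))
      ↔ ω ∈ labEvent Z (labOf (lo ∩ S) (lo ∪ S)) t s := by
    simp only [labEvent, Set.mem_setOf_eq]
    refine forall_congr' fun l => ?_
    by_cases hS : l ∈ S <;> by_cases hl : (l : ℕ) < i <;>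
      simp [labOf, hct, hcg, hlo, hS, hl, Nat.not_lt] <;> first | tauto | omega
  have hh : ∀ l ∈ S, (if ct l then (-1 : ℝ) else 0) = (-1) * (if ct l then 1 else 0) :=
    fun l _ => by split_ifs <;> ring
  rw [Finset.prod_congr rfl hh, Finset.prod_mul_distrib, Finset.prod_const, mul_assoc]
  congr 1
  by_cases hw : ω ∈ labEvent Z (labOf (lo ∩ S) (lo ∪ S)) t s
  · rw [Set.indicator_of_mem hw]
    have hmem := hiff.mpr hw
    rw [Finset.prod_eq_one (fun l hl => if_pos ((hmem l).1 hl)),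
      Finset.prod_eq_one (fun l hl => if_pos ((hmem l).2 hl)), one_mul]
  · rw [Set.indicator_of_notMem hw]
    by_cases hc1 : ∀ l ∈ S, ct l
    · have hc2 : ¬ ∀ l ∈ Finset.univ \ S, cg l :=
        fun hc2 => hw (hiff.mp (fun l => ⟨fun h => hc1 l h, fun h => hc2 l h⟩))
      push_neg at hc2
      obtain ⟨l, hlmem, hlc⟩ := hc2
      rw [Finset.prod_eq_zero hlmem
        (show (if cg l then (1 : ℝ) else 0) = 0 from if_neg hlc), mul_zero]
    · push_neg at hc1
      obtain ⟨l, hlmem, hlc⟩ := hc1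
      rw [Finset.prod_eq_zero hlmem
        (show (if ct l then (1 : ℝ) else 0) = 0 from if_neg hlc), zero_mul]

end AuxIE

theorem inclusion_exclusion_exchangeable
    {Ω : Type*} [MeasurableSpace Ω] (P : Measure Ω) [IsProbabilityMeasure P]
    (n : ℕ) (Z : Fin n → Ω → ℝ) (hZm : ∀ i, Measurable (Z i))
    (hexch : ∀ σ : Equiv.Perm (Fin n),
      Measure.map (fun ω => fun i => Z (σ i) ω) P = Measure.map (fun ω => fun i => Z i ω) P)
    (t x : ℝ) (hx : 0 ≤ x) (i : ℕ) (hi1 : 1 ≤ i) (hin : i ≤ n - 1) :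
    (P {ω | (∀ l : Fin n, (l : ℕ) < i → t < Z l ω ∧ Z l ω ≤ t + x)
        ∧ (∀ l : Fin n, i ≤ (l : ℕ) → t + x < Z l ω)}).toReal
      = (P (cdfEvent Z 0 i t (t + x))).toReal
        - (∑ j ∈ Finset.Icc 1 i, (-1 : ℝ) ^ (j + 1) * (i.choose j) *
            (P (cdfEvent Z j i t (t + x))).toReal)
        - (∑ j ∈ Finset.Icc 1 (n - i), (-1 : ℝ) ^ (j + 1) * ((n - i).choose j) *
            (P (cdfEvent Z 0 (i + j) t (t + x))).toReal)
        + ∑ j ∈ Finset.Icc 1 i, ∑ m ∈ Finset.Icc 1 (n - i),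
            (-1 : ℝ) ^ (j + m) * (i.choose j) * ((n - i).choose m) *
              (P (cdfEvent Z j (i + m) t (t + x))).toReal := by
  classical
  have hlt : i < n := by omega
  have hts : t ≤ t + x := by linarith
  set lo : Finset (Fin n) := Finset.univ.filter (fun l : Fin n => (l : ℕ) < i) with hlo
  have hlocard : lo.card = i := card_filter_val_lt (le_of_lt hlt)
  have hhicard : (Finset.univ \ lo).card = n - i := by
    rw [Finset.card_sdiff_of_subset (Finset.subset_univ _), Finset.card_univ, Fintype.card_fin, hlocard]
  set E : Set Ω := {ω | (∀ l : Fin n, (l : ℕ) < i → t < Z l ω ∧ Z l ω ≤ t + x)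
      ∧ (∀ l : Fin n, i ≤ (l : ℕ) → t + x < Z l ω)} with hE
  have hEm : MeasurableSet E := by
    have h : E = (⋂ l : Fin n, {ω | (l : ℕ) < i → t < Z l ω ∧ Z l ω ≤ t + x})
        ∩ (⋂ l : Fin n, {ω | i ≤ (l : ℕ) → t + x < Z l ω}) := by
      ext ω
      simp [hE, Set.mem_iInter]
    rw [h]
    refine MeasurableSet.inter (MeasurableSet.iInter fun l => ?_)
      (MeasurableSet.iInter fun l => ?_)
    · by_cases hl : (l : ℕ) < i
      · simp only [hl, forall_true_left]
        exact (hZm l) measurableSet_Ioc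
      · simp [hl]
    · by_cases hl : i ≤ (l : ℕ)
      · simp only [hl, forall_true_left]
        exact (hZm l) measurableSet_Ioi
      · simp [hl]
  have hESm : ∀ S : Finset (Fin n),
      MeasurableSet (labEvent Z (labOf (lo ∩ S) (lo ∪ S)) t (t + x)) :=
    fun S => measurableSet_labEvent Z hZm _ t (t + x)
  -- Step 1 : inclusion-exclusion via integration of indicator identities
  have step1 : (P E).toReal = ∑ S ∈ (Finset.univ : Finset (Fin n)).powerset,
      (-1 : ℝ) ^ S.card * (P (labEvent Z (labOf (lo ∩ S) (lo ∪ S)) t (t + x))).toReal := by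
    have hint : ∀ S : Finset (Fin n), Integrable (fun ω => (-1 : ℝ) ^ S.card *
        Set.indicator (labEvent Z (labOf (lo ∩ S) (lo ∪ S)) t (t + x)) (1 : Ω → ℝ) ω) P :=
      fun S => (((integrable_const (1 : ℝ)).indicator (hESm S)).const_mul _)
    calc (P E).toReal = ∫ ω, Set.indicator E (1 : Ω → ℝ) ω ∂P := by
          rw [integral_indicator_one hEm]; rfl
      _ = ∫ ω, (∑ S ∈ (Finset.univ : Finset (Fin n)).powerset, (-1 : ℝ) ^ S.card *
            Set.indicator (labEvent Z (labOf (lo ∩ S) (lo ∪ S)) t (t + x))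
              (1 : Ω → ℝ) ω) ∂P := by
          refine integral_congr_ae (Filter.Eventually.of_forall fun ω => ?_)
          exact key_expand Z i t (t + x) hts ω
      _ = ∑ S ∈ (Finset.univ : Finset (Fin n)).powerset, ∫ ω, (-1 : ℝ) ^ S.card *
            Set.indicator (labEvent Z (labOf (lo ∩ S) (lo ∪ S)) t (t + x))
              (1 : Ω → ℝ) ω ∂P :=
          integral_finset_sum _ (fun S _ => hint S)
      _ = ∑ S ∈ (Finset.univ : Finset (Fin n)).powerset,
            (-1 : ℝ) ^ S.card * (P (labEvent Z (labOf (lo ∩ S) (lo ∪ S)) t (t + x))).toReal := by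
          refine Finset.sum_congr rfl fun S _ => ?_
          rw [integral_const_mul, integral_indicator_one (hESm S)]; rfl
  -- Step 2 : exchangeability
  have step2 : ∀ S : Finset (Fin n), P (labEvent Z (labOf (lo ∩ S) (lo ∪ S)) t (t + x))
      = P (cdfEvent Z (lo ∩ S).card (i + (S \ lo).card) t (t + x)) := by
    intro S
    have hsub : lo ∩ S ⊆ lo ∪ S := Finset.inter_subset_left.trans Finset.subset_union_left
    obtain ⟨σ, hσ⟩ := exists_perm_comp_aux (labOf_perm (lo ∩ S) (lo ∪ S) hsub)
    have hcard : (lo ∪ S).card = i + (S \ lo).card := by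
      rw [← Finset.union_sdiff_self_eq_union, Finset.card_union_of_disjoint Finset.disjoint_sdiff,
        hlocard]
    rw [cdfEvent_eq_labEvent, ← hcard, ← hσ, labEvent_perm_eq P Z hZm hexch _ σ t (t + x)]
  set q : ℕ → ℕ → ℝ := fun a b => (P (cdfEvent Z a (i + b) t (t + x))).toReal with hqdef
  have step3 : ∑ S ∈ (Finset.univ : Finset (Fin n)).powerset,
      (-1 : ℝ) ^ S.card * (P (cdfEvent Z (lo ∩ S).card (i + (S \ lo).card) t (t + x))).toReal
      = ∑ p ∈ lo.powerset ×ˢ (Finset.univ \ lo).powerset,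
          (-1 : ℝ) ^ (p.1.card + p.2.card) * q p.1.card p.2.card := by
    refine Finset.sum_nbij' (fun S => (lo ∩ S, S \ lo)) (fun p => p.1 ∪ p.2) ?_ ?_ ?_ ?_ ?_
    · intro S _
      simp only [Finset.mem_product, Finset.mem_powerset]
      exact ⟨Finset.inter_subset_left,
        Finset.sdiff_subset_sdiff (Finset.subset_univ S) (le_refl lo)⟩
    · intro p _
      exact Finset.mem_powerset.mpr (Finset.subset_univ _)
    · intro S _
      show (lo ∩ S) ∪ (S \ lo) = S
      rw [Finset.inter_comm, Finset.union_comm]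
      exact Finset.sdiff_union_inter S lo
    · rintro ⟨p1, p2⟩ hp
      simp only [Finset.mem_product, Finset.mem_powerset] at hp
      obtain ⟨hp1, hp2⟩ := hp
      have h1 : ∀ l ∈ p2, l ∉ lo := fun l hl => (Finset.mem_sdiff.mp (hp2 hl)).2
      have e1 : lo ∩ (p1 ∪ p2) = p1 := by
        ext l
        simp only [Finset.mem_inter, Finset.mem_union]
        constructor
        · rintro ⟨hlo', h | h⟩
          · exact h
          · exact absurd hlo' (h1 l h)
        · intro h
          exact ⟨hp1 h, Or.inl h⟩
      have e2 : (p1 ∪ p2) \ lo = p2 := by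
        ext l
        simp only [Finset.mem_sdiff, Finset.mem_union]
        constructor
        · rintro ⟨h | h, hnlo⟩
          · exact absurd (hp1 h) hnlo
          · exact h
        · intro h
          exact ⟨Or.inr h, h1 l h⟩
      show (lo ∩ (p1 ∪ p2), (p1 ∪ p2) \ lo) = (p1, p2)
      simp [e1, e2]
    · intro S _
      show (-1 : ℝ) ^ S.card * (P (cdfEvent Z (lo ∩ S).card (i + (S \ lo).card) t (t + x))).toReal
        = (-1 : ℝ) ^ ((lo ∩ S).card + (S \ lo).card) * q (lo ∩ S).card (S \ lo).card
      have hc : (lo ∩ S).card + (S \ lo).card = S.card := by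
        rw [Finset.inter_comm]
        exact Finset.card_inter_add_card_sdiff S lo
      rw [← hc]
  have step4 : ∑ p ∈ lo.powerset ×ˢ (Finset.univ \ lo).powerset,
        (-1 : ℝ) ^ (p.1.card + p.2.card) * q p.1.card p.2.card
      = ∑ j ∈ Finset.range (i + 1), ∑ m ∈ Finset.range ((n - i) + 1),
          ((i.choose j : ℝ) * ((n - i).choose m : ℝ)) * ((-1 : ℝ) ^ (j + m) * q j m) := by
    rw [Finset.sum_product]
    rw [Finset.sum_powerset_apply_card
      (fun a => ∑ S2 ∈ (Finset.univ \ lo).powerset, (-1 : ℝ) ^ (a + S2.card) * q a S2.card),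
      hlocard]
    refine Finset.sum_congr rfl fun j _ => ?_
    rw [Finset.sum_powerset_apply_card (fun b => (-1 : ℝ) ^ (j + b) * q j b), hhicard,
      Finset.smul_sum]
    refine Finset.sum_congr rfl fun m _ => ?_
    rw [smul_smul, nsmul_eq_mul]
    push_cast
    ring
  rw [show (P E).toReal = (P {ω : Ω | (∀ l : Fin n, (l : ℕ) < i → t < Z l ω ∧ Z l ω ≤ t + x)
      ∧ (∀ l : Fin n, i ≤ (l : ℕ) → t + x < Z l ω)}).toReal from rfl] at step1
  rw [step1, Finset.sum_congr rfl (fun S _ => by rw [step2 S]), step3, step4]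
  -- final algebra
  have hrange : ∀ k : ℕ, Finset.range (k + 1) = insert 0 (Finset.Icc 1 k) := by
    intro k
    ext a
    simp only [Finset.mem_range, Finset.mem_insert, Finset.mem_Icc]
    omega
  have h0notin : ∀ k : ℕ, (0 : ℕ) ∉ Finset.Icc 1 k := by
    intro k
    simp
  rw [hrange i, hrange (n - i), Finset.sum_insert (h0notin i)]
  rw [Finset.sum_insert (h0notin (n - i))]
  rw [Finset.sum_congr rfl (fun j (_ : j ∈ Finset.Icc 1 i) =>
    Finset.sum_insert (h0notin (n - i)))]
  rw [Finset.sum_add_distrib]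
  have e0 : ((i.choose 0 : ℝ) * ((n - i).choose 0 : ℝ)) * ((-1 : ℝ) ^ (0 + 0) * q 0 0)
      = (P (cdfEvent Z 0 i t (t + x))).toReal := by
    simp [hqdef]
  have e1 : ∑ m ∈ Finset.Icc 1 (n - i),
        ((i.choose 0 : ℝ) * ((n - i).choose m : ℝ)) * ((-1 : ℝ) ^ (0 + m) * q 0 m)
      = -(∑ j ∈ Finset.Icc 1 (n - i), (-1 : ℝ) ^ (j + 1) * ((n - i).choose j) *
          (P (cdfEvent Z 0 (i + j) t (t + x))).toReal) := by
    rw [← Finset.sum_neg_distrib]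
    refine Finset.sum_congr rfl fun m _ => ?_
    simp only [hqdef, Nat.choose_zero_right, Nat.cast_one, pow_succ, zero_add]
    ring
  have e2 : ∑ j ∈ Finset.Icc 1 i,
        ((i.choose j : ℝ) * ((n - i).choose 0 : ℝ)) * ((-1 : ℝ) ^ (j + 0) * q j 0)
      = -(∑ j ∈ Finset.Icc 1 i, (-1 : ℝ) ^ (j + 1) * (i.choose j) *
          (P (cdfEvent Z j i t (t + x))).toReal) := by
    rw [← Finset.sum_neg_distrib]
    refine Finset.sum_congr rfl fun j _ => ?_
    have : q j 0 = (P (cdfEvent Z j i t (t + x))).toReal := by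
      simp [hqdef]
    rw [this]
    simp only [Nat.choose_zero_right, Nat.cast_one, pow_succ, Nat.add_zero]
    ring
  have e3 : ∑ j ∈ Finset.Icc 1 i, ∑ m ∈ Finset.Icc 1 (n - i),
        ((i.choose j : ℝ) * ((n - i).choose m : ℝ)) * ((-1 : ℝ) ^ (j + m) * q j m)
      = ∑ j ∈ Finset.Icc 1 i, ∑ m ∈ Finset.Icc 1 (n - i),
          (-1 : ℝ) ^ (j + m) * (i.choose j) * ((n - i).choose m) *
            (P (cdfEvent Z j (i + m) t (t + x))).toReal := by
    refine Finset.sum_congr rfl fun j _ => Finset.sum_congr rfl fun m _ => ?_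
    simp only [hqdef]
    ring
  rw [e0, e1, e2, e3]
  ring
end

section
/- Let n ≥ 1, 1 ≤ k ≤ n, and let Z_1,…,Z_n be exchangeable integrable random variables. Let t ≥ 0 be such that P(Z_{1:n} > t) > 0. Then E(Z_{n-k+1:n} − t | Z_{1:n} > t) = (1/P(Z_{1:n}>t)) ∫_0^∞ [ 1 − Σ_{j=1}^{n} (−1)^{j−1} C(n,j) P(Z_1 ≤ t+x, …, Z_j ≤ t+x) ] dx + (1/P(Z_{1:n}>t)) ∫_0^∞ Σ_{i=1}^{n−k} C(n,i) [ P(Z_1 ≤ t+x, …, Z_i ≤ t+x) − Σ_{j=1}^{i} (−1)^{j+1} C(i,j) P(Z_1 ≤ t, …, Z_j ≤ t, Z_{j+1} ≤ t+x, …, Z_i ≤ t+x) − Σ_{j=1}^{n−i} (−1)^{j+1} C(n−i,j) P(Z_1 ≤ t+x, …, Z_{i+j} ≤ t+x) + Σ_{j=1}^{i} Σ_{m=1}^{n−i} (−1)^{j+m} C(i,j) C(n−i,m) P(Z_1 ≤ t, …, Z_j ≤ t, Z_{j+1} ≤ t+x, …, Z_{i+m} ≤ t+x) ] dx. -/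
open MeasureTheory ProbabilityTheory

namespace MRL

open Finset

set_option linter.unusedSectionVars false
set_option linter.unusedVariables false
set_option linter.deprecated false

variable {Ω : Type*} [MeasurableSpace Ω] {n : ℕ}

lemma countP_ofFn {α : Type*} {n : ℕ} (f : Fin n → α) (p : α → Bool) :
    (List.ofFn f).countP p = ∑ i : Fin n, if p (f i) then 1 else 0 := by
  induction n with
  | zero => simp
  | succ m ih =>
      rw [List.ofFn_succ, List.countP_cons, Fin.sum_univ_succ, ih (fun i => f i.succ)]
      omega

lemma countP_get {α : Type*} (l : List α) (p : α → Bool) :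
    l.countP p = (Finset.univ.filter fun k : Fin l.length => p (l.get k)).card := by
  conv_lhs => rw [← List.ofFn_get l, countP_ofFn]
  rw [Finset.card_filter]


lemma orderStat_lt_iff {Ω : Type*} {n : ℕ} (Z : Fin n → Ω → ℝ) {j : ℕ}
    (hj1 : 1 ≤ j) (hjn : j ≤ n) (ω : Ω) (s : ℝ) :
    s < orderStat Z j ω ↔ (Finset.univ.filter fun l : Fin n => Z l ω ≤ s).card < j := by
  classical
  set L := List.ofFn fun i => Z i ω with hL
  set l := L.mergeSort (fun x y => x ≤ y) with hl
  have hlen : l.length = n := by simp [hl, hL]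
  have hsort : l.Pairwise (· ≤ ·) := by
    have := List.pairwise_mergeSort (le := fun x y : ℝ => decide (x ≤ y))
      (fun a b c h1 h2 => by simp only [decide_eq_true_eq] at *; linarith)
      (fun a b => by simpa using le_total a b) L
    simpa using this
  have hm : j - 1 < l.length := by omega
  have hget : orderStat Z j ω = l.get ⟨j - 1, hm⟩ := List.getD_eq_get l 0 ⟨j - 1, hm⟩
  have hcnt : (Finset.univ.filter fun k : Fin n => Z k ω ≤ s).card
      = (Finset.univ.filter fun k : Fin l.length => l.get k ≤ s).card := by
    have h1 : L.countP (fun y => decide (y ≤ s)) = l.countP (fun y => decide (y ≤ s)) :=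
      ((List.mergeSort_perm L _).countP_eq _).symm
    have h2 : L.countP (fun y => decide (y ≤ s))
        = (Finset.univ.filter fun k : Fin n => Z k ω ≤ s).card := by
      rw [hL, countP_ofFn, Finset.card_filter]; simp
    have h3 := countP_get l (fun y => decide (y ≤ s))
    simp only [decide_eq_true_eq] at h1 h2 h3
    rw [← h2, h1, h3]
  rw [hget, hcnt]
  constructor
  · intro h
    have hsub : (Finset.univ.filter fun k : Fin l.length => l.get k ≤ s)
        ⊆ Finset.Iio ⟨j - 1, hm⟩ := by
      intro k hk
      simp only [Finset.mem_filter, Finset.mem_univ, true_and] at hk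
      rw [Finset.mem_Iio]
      by_contra hk2
      have hle : (⟨j - 1, hm⟩ : Fin l.length) ≤ k := not_lt.1 hk2
      have := hsort.rel_get_of_le hle
      exact absurd (le_trans this hk) (not_le.2 h)
    calc (Finset.univ.filter fun k : Fin l.length => l.get k ≤ s).card
        ≤ (Finset.Iio (⟨j - 1, hm⟩ : Fin l.length)).card := Finset.card_le_card hsub
      _ = j - 1 := Fin.card_Iio _
      _ < j := by omega
  · intro h
    by_contra hc
    have hc' : l.get ⟨j - 1, hm⟩ ≤ s := not_lt.1 hc
    have hsub : Finset.Iic (⟨j - 1, hm⟩ : Fin l.length)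
        ⊆ Finset.univ.filter fun k : Fin l.length => l.get k ≤ s := by
      intro k hk
      rw [Finset.mem_Iic] at hk
      simp only [Finset.mem_filter, Finset.mem_univ, true_and]
      exact le_trans (hsort.rel_get_of_le hk) hc'
    have := Finset.card_le_card hsub
    rw [Fin.card_Iic] at this
    have hv : ((⟨j - 1, hm⟩ : Fin l.length) : ℕ) = j - 1 := rfl
    omega


/-- The event: all of `J` at level `≤ t`, all of `K` at level `≤ s`. -/
def Dset (Z : Fin n → Ω → ℝ) (J K : Finset (Fin n)) (t s : ℝ) : Set Ω :=
  {ω | (∀ l ∈ J, Z l ω ≤ t) ∧ ∀ l ∈ K, Z l ω ≤ s}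

lemma measurableSet_Dset {Z : Fin n → Ω → ℝ} (hZm : ∀ i, Measurable (Z i))
    (J K : Finset (Fin n)) (t s : ℝ) : MeasurableSet (Dset Z J K t s) := by
  have : Dset Z J K t s =
      (⋂ l ∈ (J : Set (Fin n)), Z l ⁻¹' Set.Iic t) ∩ ⋂ l ∈ (K : Set (Fin n)), Z l ⁻¹' Set.Iic s := by
    ext ω; simp [Dset, Set.mem_iInter]
  rw [this]
  exact ((MeasurableSet.biInter (Set.to_countable _)
      fun l _ => (hZm l) measurableSet_Iic).inter
    (MeasurableSet.biInter (Set.to_countable _) fun l _ => (hZm l) measurableSet_Iic))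

lemma cdfEvent_eq_Dset (Z : Fin n → Ω → ℝ) (j i : ℕ) (t s : ℝ) :
    cdfEvent Z j i t s
      = Dset Z (Finset.univ.filter fun l : Fin n => (l : ℕ) < j)
          (Finset.univ.filter fun l : Fin n => j ≤ (l : ℕ) ∧ (l : ℕ) < i) t s := by
  ext ω
  simp only [cdfEvent, Dset, Set.mem_setOf_eq, Finset.mem_filter, Finset.mem_univ, true_and]
  constructor
  · exact fun h => ⟨fun l hl => (h l).1 hl, fun l hl => (h l).2 hl.1 hl.2⟩
  · exact fun h l => ⟨fun hl => h.1 l hl, fun h1 h2 => h.2 l ⟨h1, h2⟩⟩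

lemma card_filter_lt (j : ℕ) (hj : j ≤ n) :
    (Finset.univ.filter fun l : Fin n => (l : ℕ) < j).card = j := by
  have he : (Finset.univ.filter fun l : Fin n => (l : ℕ) < j)
      = (Finset.range j).attachFin (fun m hm => lt_of_lt_of_le (Finset.mem_range.1 hm) hj) := by
    ext l; simp [Finset.mem_attachFin]
  rw [he, Finset.card_attachFin, Finset.card_range]

lemma card_filter_Ico (j i : ℕ) (hi : i ≤ n) :
    (Finset.univ.filter fun l : Fin n => j ≤ (l : ℕ) ∧ (l : ℕ) < i).card = i - j := by
  have he : (Finset.univ.filter fun l : Fin n => j ≤ (l : ℕ) ∧ (l : ℕ) < i)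
      = (Finset.Ico j i).attachFin
          (fun m hm => lt_of_lt_of_le (Finset.mem_Ico.1 hm).2 hi) := by
    ext l; simp [Finset.mem_attachFin]
  rw [he, Finset.card_attachFin, Nat.card_Ico]

lemma exists_comp_eq {α β : Type*} [Fintype α] [DecidableEq α] [DecidableEq β] (f g : α → β)
    (h : ∀ b, (Finset.univ.filter fun a => f a = b).card
      = (Finset.univ.filter fun a => g a = b).card) :
    ∃ σ : Equiv.Perm α, ∀ a, f (σ a) = g a := by
  have e : ∀ b, {a // g a = b} ≃ {a // f a = b} := fun b =>
    Fintype.equivOfCardEq (by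
      rw [Fintype.card_subtype, Fintype.card_subtype, h b])
  refine ⟨(Equiv.sigmaFiberEquiv g).symm.trans
    ((Equiv.sigmaCongrRight e).trans (Equiv.sigmaFiberEquiv f)), fun a => ?_⟩
  exact ((e (g a)) ⟨a, rfl⟩).2


/-- pattern function of a disjoint pair of finsets -/
def pat (J K : Finset (Fin n)) (a : Fin n) : ℕ := if a ∈ J then 0 else if a ∈ K then 1 else 2

lemma pat_card (J K : Finset (Fin n)) (hd : Disjoint J K) (b : ℕ) :
    (Finset.univ.filter fun a => pat J K a = b).card =
      if b = 0 then J.card else if b = 1 then K.card else if b = 2 then n - J.card - K.card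
        else 0 := by
  classical
  rcases Nat.lt_or_ge b 3 with hb | hb
  · interval_cases b
    · have : (Finset.univ.filter fun a => pat J K a = 0) = J := by
        ext a; rw [Finset.mem_filter]; simp only [Finset.mem_filter, Finset.mem_univ, true_and, pat]
        split_ifs with h1 h2 <;> simp_all
      simp [this]
    · have : (Finset.univ.filter fun a => pat J K a = 1) = K := by
        ext a; rw [Finset.mem_filter]; simp only [Finset.mem_filter, Finset.mem_univ, true_and, pat]
        split_ifs with h1 h2 <;> simp_all
        exact fun hK => (Finset.disjoint_left.1 hd) h1 hK
      simp [this]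
    · have : (Finset.univ.filter fun a => pat J K a = 2) = (J ∪ K)ᶜ := by
        ext a; rw [Finset.mem_filter]; simp only [Finset.mem_filter, Finset.mem_univ, true_and, pat,
          Finset.mem_compl, Finset.mem_union]
        split_ifs with h1 h2 <;> simp_all
      rw [this, Finset.card_compl, Finset.card_union_of_disjoint hd]
      simp [Nat.sub_sub]
  · have : (Finset.univ.filter fun a => pat J K a = b) = ∅ := by
      ext a; rw [Finset.mem_filter]; simp only [Finset.mem_filter, Finset.mem_univ, true_and, pat]
      split_ifs <;> simp <;> omega
    rw [this]
    have h0 : ¬ b = 0 := by omega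
    have h1 : ¬ b = 1 := by omega
    have h2 : ¬ b = 2 := by omega
    simp [h0, h1, h2]

lemma mem_iff_pat0 {J K : Finset (Fin n)} (a : Fin n) : a ∈ J ↔ pat J K a = 0 := by
  unfold pat; split_ifs <;> simp_all

lemma mem_iff_pat1 {J K : Finset (Fin n)} (hd : Disjoint J K) (a : Fin n) :
    a ∈ K ↔ pat J K a = 1 := by
  unfold pat
  have hdl : a ∈ J → a ∉ K := fun h1 h2 => Finset.disjoint_left.1 hd h1 h2
  split_ifs <;> simp_all

lemma measure_Dset_eq (P : Measure Ω) (Z : Fin n → Ω → ℝ) (hZm : ∀ i, Measurable (Z i))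
    (hexch : ∀ σ : Equiv.Perm (Fin n),
      Measure.map (fun ω => fun i => Z (σ i) ω) P = Measure.map (fun ω => fun i => Z i ω) P)
    (J K : Finset (Fin n)) (hd : Disjoint J K) (t s : ℝ) :
    P (Dset Z J K t s) = P (cdfEvent Z J.card (J.card + K.card) t s) := by
  classical
  set j := J.card with hj
  set i := J.card + K.card with hi
  have hin : i ≤ n := by
    rw [hi, ← Finset.card_union_of_disjoint hd]
    exact Finset.card_le_univ _ |>.trans (by simp)
  set J₀ := Finset.univ.filter fun l : Fin n => (l : ℕ) < j with hJ₀
  set K₀ := Finset.univ.filter fun l : Fin n => j ≤ (l : ℕ) ∧ (l : ℕ) < i with hK₀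
  have hd₀ : Disjoint J₀ K₀ := by
    rw [Finset.disjoint_left]
    intro a ha ha'
    simp [hJ₀, hK₀] at ha ha'
    omega
  have hcJ₀ : J₀.card = J.card := by rw [hJ₀, card_filter_lt j (le_trans (by omega) hin)]
  have hcK₀ : K₀.card = K.card := by rw [hK₀, card_filter_Ico j i hin]; omega
  -- a permutation matching patterns
  obtain ⟨σ, hσ⟩ := exists_comp_eq (pat J K) (pat J₀ K₀) (fun b => by
    rw [pat_card J K hd b, pat_card J₀ K₀ hd₀ b, hcJ₀, hcK₀])
  have hσJ : ∀ a, σ a ∈ J ↔ a ∈ J₀ := fun a => by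
    rw [mem_iff_pat0 (K := K), hσ a, ← mem_iff_pat0]
  have hσK : ∀ a, σ a ∈ K ↔ a ∈ K₀ := fun a => by
    rw [mem_iff_pat1 hd, hσ a, ← mem_iff_pat1 hd₀]
  set B : Set (Fin n → ℝ) := {v | (∀ l ∈ J₀, v l ≤ t) ∧ ∀ l ∈ K₀, v l ≤ s} with hB
  have hBm : MeasurableSet B := by
    have : B = (⋂ l ∈ (J₀ : Set (Fin n)), (fun v : Fin n → ℝ => v l) ⁻¹' Set.Iic t)
        ∩ ⋂ l ∈ (K₀ : Set (Fin n)), (fun v : Fin n → ℝ => v l) ⁻¹' Set.Iic s := by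
      ext v; simp [hB]
    rw [this]
    exact (MeasurableSet.biInter (Set.to_countable _)
        fun l _ => (measurable_pi_apply l) measurableSet_Iic).inter
      (MeasurableSet.biInter (Set.to_countable _)
        fun l _ => (measurable_pi_apply l) measurableSet_Iic)
  have hmeasσ : Measurable fun ω => fun i => Z (σ i) ω :=
    measurable_pi_lambda _ fun i => hZm (σ i)
  have hmeas1 : Measurable fun ω => fun i : Fin n => Z i ω :=
    measurable_pi_lambda _ fun i => hZm i
  have h1 : (fun ω => fun i => Z (σ i) ω) ⁻¹' B = Dset Z J K t s := by
    ext ω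
    simp only [Set.mem_preimage, hB, Set.mem_setOf_eq, Dset]
    constructor
    · rintro ⟨hJt, hKs⟩
      refine ⟨fun l hl => ?_, fun l hl => ?_⟩
      · have : σ (σ.symm l) ∈ J := by rwa [Equiv.apply_symm_apply]
        have := hJt (σ.symm l) ((hσJ (σ.symm l)).1 this)
        rwa [Equiv.apply_symm_apply] at this
      · have : σ (σ.symm l) ∈ K := by rwa [Equiv.apply_symm_apply]
        have := hKs (σ.symm l) ((hσK (σ.symm l)).1 this)
        rwa [Equiv.apply_symm_apply] at this
    · rintro ⟨hJt, hKs⟩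
      exact ⟨fun l hl => hJt _ ((hσJ l).2 hl), fun l hl => hKs _ ((hσK l).2 hl)⟩
  have h2 : (fun ω => fun i : Fin n => Z i ω) ⁻¹' B = Dset Z J₀ K₀ t s := rfl
  calc P (Dset Z J K t s) = P ((fun ω => fun i => Z (σ i) ω) ⁻¹' B) := by rw [h1]
    _ = Measure.map (fun ω => fun i => Z (σ i) ω) P B := (Measure.map_apply hmeasσ hBm).symm
    _ = Measure.map (fun ω => fun i : Fin n => Z i ω) P B := by rw [hexch σ]
    _ = P ((fun ω => fun i : Fin n => Z i ω) ⁻¹' B) := Measure.map_apply hmeas1 hBm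
    _ = P (Dset Z J₀ K₀ t s) := by rw [h2]
    _ = P (cdfEvent Z j i t s) := by rw [cdfEvent_eq_Dset]


/-- indicator of `Z l · ≤ c` as a real-valued function -/
noncomputable def bt (Z : Fin n → Ω → ℝ) (l : Fin n) (c : ℝ) (ω : Ω) : ℝ := if Z l ω ≤ c then 1 else 0

/-- the event: everything in `T` lies in `(t, s]`, everything outside is `> s` -/
def ET (Z : Fin n → Ω → ℝ) (T : Finset (Fin n)) (t s : ℝ) : Set Ω :=
  {ω | (∀ l ∈ T, t < Z l ω ∧ Z l ω ≤ s) ∧ ∀ l ∉ T, s < Z l ω}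

lemma measurableSet_ET {Z : Fin n → Ω → ℝ} (hZm : ∀ i, Measurable (Z i))
    (T : Finset (Fin n)) (t s : ℝ) : MeasurableSet (ET Z T t s) := by
  have : ET Z T t s = (⋂ l ∈ (T : Set (Fin n)),
        (Z l ⁻¹' Set.Ioi t ∩ Z l ⁻¹' Set.Iic s)) ∩
      ⋂ l ∈ ((↑Tᶜ : Set (Fin n))), Z l ⁻¹' Set.Ioi s := by
    ext ω
    simp [ET, Set.mem_iInter]
  rw [this]
  exact (MeasurableSet.biInter (Set.to_countable _) fun l _ =>
      ((hZm l) measurableSet_Ioi).inter ((hZm l) measurableSet_Iic)).inter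
    (MeasurableSet.biInter (Set.to_countable _) fun l _ => (hZm l) measurableSet_Ioi)

lemma prod_bt_eq_indicator (Z : Fin n → Ω → ℝ) (J K : Finset (Fin n)) (t s : ℝ) :
    (fun ω => (∏ l ∈ J, bt Z l t ω) * ∏ l ∈ K, bt Z l s ω)
      = (Dset Z J K t s).indicator (fun _ => (1 : ℝ)) := by
  funext ω
  by_cases hω : ω ∈ Dset Z J K t s
  · rw [Set.indicator_of_mem hω]
    obtain ⟨h1, h2⟩ := hω
    rw [Finset.prod_eq_one fun l hl => by simp [bt, h1 l hl],
      Finset.prod_eq_one fun l hl => by simp [bt, h2 l hl], mul_one]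
  · rw [Set.indicator_of_notMem hω]
    simp only [Dset, Set.mem_setOf_eq, not_and_or, not_forall] at hω
    rcases hω with ⟨l, hl, hls⟩ | ⟨l, hl, hls⟩
    · rw [Finset.prod_eq_zero hl (by simp [bt, hls]), zero_mul]
    · rw [Finset.prod_eq_zero hl (by simp [bt, hls]), mul_zero]

lemma integrable_prod_bt (P : Measure Ω) [IsProbabilityMeasure P] (Z : Fin n → Ω → ℝ)
    (hZm : ∀ i, Measurable (Z i)) (J K : Finset (Fin n)) (t s : ℝ) :
    Integrable (fun ω => (∏ l ∈ J, bt Z l t ω) * ∏ l ∈ K, bt Z l s ω) P := by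
  rw [prod_bt_eq_indicator]
  exact (integrable_const (1 : ℝ)).indicator (measurableSet_Dset hZm J K t s)

lemma integral_prod_bt (P : Measure Ω) [IsProbabilityMeasure P] (Z : Fin n → Ω → ℝ)
    (hZm : ∀ i, Measurable (Z i)) (J K : Finset (Fin n)) (t s : ℝ) :
    ∫ ω, (∏ l ∈ J, bt Z l t ω) * ∏ l ∈ K, bt Z l s ω ∂P = (P (Dset Z J K t s)).toReal := by
  rw [prod_bt_eq_indicator, integral_indicator_const (1 : ℝ) (measurableSet_Dset hZm J K t s),
    smul_eq_mul, mul_one, measureReal_def]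

lemma indicator_ET (Z : Fin n → Ω → ℝ) (T : Finset (Fin n)) (t s : ℝ) (hts : t ≤ s) :
    (ET Z T t s).indicator (fun _ => (1 : ℝ))
      = fun ω => (∏ l ∈ T, (bt Z l s ω - bt Z l t ω)) * ∏ l ∈ Tᶜ, (1 - bt Z l s ω) := by
  funext ω
  by_cases hω : ω ∈ ET Z T t s
  · rw [Set.indicator_of_mem hω]
    obtain ⟨h1, h2⟩ := hω
    rw [Finset.prod_eq_one fun l hl => by
        obtain ⟨ha, hb⟩ := h1 l hl
        simp [bt, hb, not_le.2 ha],
      Finset.prod_eq_one fun l hl => by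
        have := h2 l (Finset.mem_compl.1 hl)
        simp [bt, not_le.2 this],
      mul_one]
  · rw [Set.indicator_of_notMem hω]
    symm
    rw [ET, Set.mem_setOf_eq, not_and_or] at hω
    rcases hω with h | h
    · push_neg at h
      obtain ⟨l, hl, hls⟩ := h
      have hfac : bt Z l s ω - bt Z l t ω = 0 := by
        by_cases hzt : Z l ω ≤ t
        · simp [bt, hzt, le_trans hzt hts]
        · have := hls (not_le.1 hzt)
          simp [bt, hzt, not_le.2 this]
      rw [Finset.prod_eq_zero hl hfac, zero_mul]
    · push_neg at h
      obtain ⟨l, hl, hls⟩ := h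
      have hfac : 1 - bt Z l s ω = 0 := by simp [bt, hls]
      rw [Finset.prod_eq_zero (Finset.mem_compl.2 hl) hfac, mul_zero]

lemma prod_neg' {α : Type*} [CommRing α] (J : Finset (Fin n)) (f : Fin n → α) :
    ∏ l ∈ J, -(f l) = (-1) ^ J.card * ∏ l ∈ J, f l := by
  rw [← Finset.prod_const, ← Finset.prod_mul_distrib]
  exact Finset.prod_congr rfl fun l _ => by ring

lemma expand_prod (Z : Fin n → Ω → ℝ) (T : Finset (Fin n)) (t s : ℝ) (ω : Ω) :
    (∏ l ∈ T, (bt Z l s ω - bt Z l t ω)) * ∏ l ∈ Tᶜ, (1 - bt Z l s ω)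
      = ∑ J ∈ T.powerset, ∑ M ∈ Tᶜ.powerset, ((-1 : ℝ) ^ (J.card + M.card)) *
          ((∏ l ∈ J, bt Z l t ω) * ∏ l ∈ (T \ J) ∪ M, bt Z l s ω) := by
  have h1 : ∏ l ∈ T, (bt Z l s ω - bt Z l t ω)
      = ∑ J ∈ T.powerset, (-1 : ℝ) ^ J.card *
          ((∏ l ∈ J, bt Z l t ω) * ∏ l ∈ T \ J, bt Z l s ω) := by
    have h := Finset.prod_add (fun l => -(bt Z l t ω)) (fun l => bt Z l s ω) T
    simp only [neg_add_eq_sub] at h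
    rw [h]
    exact Finset.sum_congr rfl fun J hJ => by rw [prod_neg']; ring
  have h2 : ∏ l ∈ Tᶜ, (1 - bt Z l s ω)
      = ∑ M ∈ Tᶜ.powerset, (-1 : ℝ) ^ M.card * ∏ l ∈ M, bt Z l s ω := by
    have h := Finset.prod_add (fun l => -(bt Z l s ω)) (fun l => (1 : ℝ)) Tᶜ
    simp only [neg_add_eq_sub] at h
    rw [h]
    exact Finset.sum_congr rfl fun M hM => by rw [prod_neg', Finset.prod_const_one]; ring
  rw [h1, h2, Finset.sum_mul_sum]
  refine Finset.sum_congr rfl fun J hJ => Finset.sum_congr rfl fun M hM => ?_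
  rw [Finset.mem_powerset] at hJ hM
  have hdisj : Disjoint (T \ J) M :=
    Finset.disjoint_left.2 fun a ha haM =>
      (Finset.mem_compl.1 (hM haM)) (Finset.mem_sdiff.1 ha).1
  rw [Finset.prod_union hdisj, pow_add]
  ring

lemma toReal_measure_ET_sum (P : Measure Ω) [IsProbabilityMeasure P] (Z : Fin n → Ω → ℝ)
    (hZm : ∀ i, Measurable (Z i))
    (hexch : ∀ σ : Equiv.Perm (Fin n),
      Measure.map (fun ω => fun i => Z (σ i) ω) P = Measure.map (fun ω => fun i => Z i ω) P)
    (T : Finset (Fin n)) (t s : ℝ) (hts : t ≤ s) :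
    (P (ET Z T t s)).toReal
      = ∑ j ∈ Finset.range (T.card + 1), ∑ m ∈ Finset.range (n - T.card + 1),
          (-1 : ℝ) ^ (j + m) * (T.card.choose j) * ((n - T.card).choose m) *
            (P (cdfEvent Z j (T.card + m) t s)).toReal := by
  classical
  have hstep1 : (P (ET Z T t s)).toReal
      = ∫ ω, (∏ l ∈ T, (bt Z l s ω - bt Z l t ω)) * ∏ l ∈ Tᶜ, (1 - bt Z l s ω) ∂P := by
    rw [← indicator_ET Z T t s hts,
      integral_indicator_const (1 : ℝ) (measurableSet_ET hZm T t s), smul_eq_mul, mul_one, measureReal_def]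
  have hint : ∀ J M : Finset (Fin n), Integrable
      (fun ω => ((-1 : ℝ) ^ (J.card + M.card)) *
        ((∏ l ∈ J, bt Z l t ω) * ∏ l ∈ (T \ J) ∪ M, bt Z l s ω)) P :=
    fun J M => (integrable_prod_bt P Z hZm J ((T \ J) ∪ M) t s).const_mul _
  have hstep2 : (P (ET Z T t s)).toReal
      = ∑ J ∈ T.powerset, ∑ M ∈ Tᶜ.powerset, ((-1 : ℝ) ^ (J.card + M.card)) *
          (P (Dset Z J ((T \ J) ∪ M) t s)).toReal := by
    rw [hstep1]
    have : (fun ω => (∏ l ∈ T, (bt Z l s ω - bt Z l t ω)) * ∏ l ∈ Tᶜ, (1 - bt Z l s ω))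
        = fun ω => ∑ J ∈ T.powerset, ∑ M ∈ Tᶜ.powerset, ((-1 : ℝ) ^ (J.card + M.card)) *
            ((∏ l ∈ J, bt Z l t ω) * ∏ l ∈ (T \ J) ∪ M, bt Z l s ω) :=
      funext fun ω => expand_prod Z T t s ω
    rw [this, integral_finset_sum _ (fun J _ => integrable_finset_sum _ (fun M _ => hint J M))]
    refine Finset.sum_congr rfl fun J hJ => ?_
    rw [integral_finset_sum _ (fun M _ => hint J M)]
    refine Finset.sum_congr rfl fun M hM => ?_
    rw [MeasureTheory.integral_const_mul, integral_prod_bt P Z hZm]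
  have hstep3 : (P (ET Z T t s)).toReal
      = ∑ J ∈ T.powerset, ∑ M ∈ Tᶜ.powerset, ((-1 : ℝ) ^ (J.card + M.card)) *
          (P (cdfEvent Z J.card (T.card + M.card) t s)).toReal := by
    rw [hstep2]
    refine Finset.sum_congr rfl fun J hJ => Finset.sum_congr rfl fun M hM => ?_
    rw [Finset.mem_powerset] at hJ hM
    have hd1 : Disjoint J (T \ J) := Finset.disjoint_sdiff
    have hd2 : Disjoint J M := Finset.disjoint_left.2 fun a haJ haM =>
      (Finset.mem_compl.1 (hM haM)) (hJ haJ)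
    have hd3 : Disjoint (T \ J) M := Finset.disjoint_left.2 fun a ha haM =>
      (Finset.mem_compl.1 (hM haM)) (Finset.mem_sdiff.1 ha).1
    have hd : Disjoint J ((T \ J) ∪ M) := Finset.disjoint_union_right.2 ⟨hd1, hd2⟩
    have hcard : J.card + ((T \ J) ∪ M).card = T.card + M.card := by
      rw [Finset.card_union_of_disjoint hd3, Finset.card_sdiff_of_subset hJ]
      have := Finset.card_le_card hJ
      omega
    rw [measure_Dset_eq P Z hZm hexch J ((T \ J) ∪ M) hd t s, hcard]
  rw [hstep3]
  have hTc : Tᶜ.card = n - T.card := by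
    rw [Finset.card_compl, Fintype.card_fin]
  calc ∑ J ∈ T.powerset, ∑ M ∈ Tᶜ.powerset, ((-1 : ℝ) ^ (J.card + M.card)) *
          (P (cdfEvent Z J.card (T.card + M.card) t s)).toReal
      = ∑ J ∈ T.powerset, ∑ m ∈ Finset.range (n - T.card + 1), ((n - T.card).choose m) •
          (((-1 : ℝ) ^ (J.card + m)) * (P (cdfEvent Z J.card (T.card + m) t s)).toReal) := by
        refine Finset.sum_congr rfl fun J hJ => ?_
        rw [Finset.sum_powerset_apply_card
          (fun m => ((-1 : ℝ) ^ (J.card + m)) * (P (cdfEvent Z J.card (T.card + m) t s)).toReal),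
          hTc]
    _ = ∑ j ∈ Finset.range (T.card + 1), (T.card.choose j) •
          ∑ m ∈ Finset.range (n - T.card + 1), ((n - T.card).choose m) •
            (((-1 : ℝ) ^ (j + m)) * (P (cdfEvent Z j (T.card + m) t s)).toReal) := by
        rw [Finset.sum_powerset_apply_card
          (fun j => ∑ m ∈ Finset.range (n - T.card + 1), ((n - T.card).choose m) •
            (((-1 : ℝ) ^ (j + m)) * (P (cdfEvent Z j (T.card + m) t s)).toReal))]
    _ = _ := by
        refine Finset.sum_congr rfl fun j hj => ?_
        rw [Finset.smul_sum]
        refine Finset.sum_congr rfl fun m hm => ?_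
        simp only [nsmul_eq_mul]
        ring

/-- The master double sum. -/
noncomputable def DS (P : Measure Ω) (Z : Fin n → Ω → ℝ) (i : ℕ) (t s : ℝ) : ℝ :=
  ∑ j ∈ Finset.range (i + 1), ∑ m ∈ Finset.range (n - i + 1),
    (-1 : ℝ) ^ (j + m) * (i.choose j) * ((n - i).choose m) *
      (P (cdfEvent Z j (i + m) t s)).toReal

lemma toReal_measure_ET (P : Measure Ω) [IsProbabilityMeasure P] (Z : Fin n → Ω → ℝ)
    (hZm : ∀ i, Measurable (Z i))
    (hexch : ∀ σ : Equiv.Perm (Fin n),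
      Measure.map (fun ω => fun i => Z (σ i) ω) P = Measure.map (fun ω => fun i => Z i ω) P)
    (T : Finset (Fin n)) (t s : ℝ) (hts : t ≤ s) :
    (P (ET Z T t s)).toReal = DS P Z T.card t s :=
  toReal_measure_ET_sum P Z hZm hexch T t s hts

lemma sum_ET_eq (P : Measure Ω) [IsProbabilityMeasure P] (Z : Fin n → Ω → ℝ)
    (hZm : ∀ i, Measurable (Z i))
    (hexch : ∀ σ : Equiv.Perm (Fin n),
      Measure.map (fun ω => fun i => Z (σ i) ω) P = Measure.map (fun ω => fun i => Z i ω) P)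
    (i : ℕ) (t s : ℝ) (hts : t ≤ s) :
    ∑ T ∈ Finset.powersetCard i (Finset.univ : Finset (Fin n)), (P (ET Z T t s)).toReal
      = (n.choose i : ℝ) * DS P Z i t s := by
  have h : ∀ T ∈ Finset.powersetCard i (Finset.univ : Finset (Fin n)),
      (P (ET Z T t s)).toReal = DS P Z i t s := by
    intro T hT
    rw [toReal_measure_ET P Z hZm hexch T t s hts,
      (Finset.mem_powersetCard_univ.1 hT : T.card = i)]
  rw [Finset.sum_congr rfl h, Finset.sum_const, Finset.card_powersetCard, Finset.card_univ,
    Fintype.card_fin, nsmul_eq_mul]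

lemma event_biUnion (Z : Fin n → Ω → ℝ) (k : ℕ) (hn : 1 ≤ n) (hk1 : 1 ≤ k) (hkn : k ≤ n)
    (t x : ℝ) (hx : 0 < x) :
    {ω | (∀ l, t < Z l ω) ∧ t + x < orderStat Z (n - k + 1) ω}
      = ⋃ T ∈ ((Finset.univ : Finset (Fin n)).powerset.filter fun T => T.card ≤ n - k),
          ET Z T t (t + x) := by
  have hj1 : 1 ≤ n - k + 1 := by omega
  have hjn : n - k + 1 ≤ n := by omega
  ext ω
  simp only [Set.mem_setOf_eq, Set.mem_iUnion, exists_prop, Finset.mem_filter,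
    Finset.mem_powerset]
  constructor
  · rintro ⟨hA, hcnt⟩
    rw [orderStat_lt_iff Z hj1 hjn ω (t + x)] at hcnt
    refine ⟨Finset.univ.filter fun l => Z l ω ≤ t + x, ⟨Finset.subset_univ _, by omega⟩,
      fun l hl => ?_, fun l hl => ?_⟩
    · rw [Finset.mem_filter] at hl
      exact ⟨hA l, hl.2⟩
    · rw [Finset.mem_filter] at hl
      push_neg at hl
      exact hl (Finset.mem_univ l)
  · rintro ⟨T, ⟨hTu, hTc⟩, h1, h2⟩
    have hfe : (Finset.univ.filter fun l : Fin n => Z l ω ≤ t + x) = T := by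
      ext l
      simp only [Finset.mem_filter, Finset.mem_univ, true_and]
      constructor
      · intro hle
        by_contra hl
        exact absurd hle (not_le.2 (h2 l hl))
      · exact fun hl => (h1 l hl).2
    refine ⟨fun l => ?_, ?_⟩
    · by_cases hl : l ∈ T
      · exact (h1 l hl).1
      · exact lt_trans (by linarith) (h2 l hl)
    · rw [orderStat_lt_iff Z hj1 hjn ω (t + x), hfe]
      omega

lemma measure_event_eq (P : Measure Ω) [IsProbabilityMeasure P] (Z : Fin n → Ω → ℝ)
    (hZm : ∀ i, Measurable (Z i))
    (hexch : ∀ σ : Equiv.Perm (Fin n),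
      Measure.map (fun ω => fun i => Z (σ i) ω) P = Measure.map (fun ω => fun i => Z i ω) P)
    (k : ℕ) (hn : 1 ≤ n) (hk1 : 1 ≤ k) (hkn : k ≤ n) (t x : ℝ) (hx : 0 < x) :
    (P {ω | (∀ l, t < Z l ω) ∧ t + x < orderStat Z (n - k + 1) ω}).toReal
      = ∑ i ∈ Finset.range (n - k + 1), (n.choose i : ℝ) * DS P Z i t (t + x) := by
  classical
  set 𝒯 := ((Finset.univ : Finset (Fin n)).powerset.filter fun T => T.card ≤ n - k) with h𝒯
  have hdisj : (↑𝒯 : Set (Finset (Fin n))).PairwiseDisjoint fun T => ET Z T t (t + x) := by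
    intro T₁ _ T₂ _ hne
    rw [Function.onFun, Set.disjoint_left]
    intro ω hω1 hω2
    refine hne (Finset.ext fun l => ⟨fun hl => ?_, fun hl => ?_⟩)
    · by_contra hl2
      exact absurd (hω1.1 l hl).2 (not_le.2 (hω2.2 l hl2))
    · by_contra hl2
      exact absurd (hω2.1 l hl).2 (not_le.2 (hω1.2 l hl2))
  have hmeas : ∀ T ∈ 𝒯, MeasurableSet (ET Z T t (t + x)) :=
    fun T _ => measurableSet_ET hZm T t (t + x)
  rw [event_biUnion Z k hn hk1 hkn t x hx, ← h𝒯,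
    measure_biUnion_finset hdisj hmeas, ENNReal.toReal_sum (fun T _ => measure_ne_top P _)]
  have hmaps : ∀ T ∈ 𝒯, T.card ∈ Finset.range (n - k + 1) := by
    intro T hT
    rw [h𝒯, Finset.mem_filter] at hT
    rw [Finset.mem_range]
    omega
  rw [← Finset.sum_fiberwise_of_maps_to hmaps fun T => (P (ET Z T t (t + x))).toReal]
  refine Finset.sum_congr rfl fun i hi => ?_
  rw [Finset.mem_range] at hi
  have hfe : 𝒯.filter (fun T => T.card = i) = Finset.powersetCard i Finset.univ := by
    ext T
    simp only [h𝒯, Finset.mem_filter, Finset.mem_powerset, Finset.mem_powersetCard_univ]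
    constructor
    · rintro ⟨_, h⟩; exact h
    · intro h; exact ⟨⟨Finset.subset_univ _, by omega⟩, h⟩
  rw [hfe, sum_ET_eq P Z hZm hexch i t (t + x) (by linarith)]


lemma cdfEvent_zero_zero (Z : Fin n → Ω → ℝ) (t s : ℝ) :
    cdfEvent Z 0 0 t s = Set.univ := by
  ext ω; simp [cdfEvent]

lemma range_eq_insert_Icc (a : ℕ) : Finset.range (a + 1) = insert 0 (Finset.Icc 1 a) := by
  ext b
  simp only [Finset.mem_range, Finset.mem_insert, Finset.mem_Icc]
  omega

lemma neg_pow_pred {a : ℕ} (ha : a ∈ Finset.Icc 1 n) : (-1 : ℝ) ^ a = -(-1 : ℝ) ^ (a - 1) := by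
  rw [Finset.mem_Icc] at ha
  obtain ⟨a', rfl⟩ := Nat.exists_eq_add_of_le ha.1
  have : 1 + a' - 1 = a' := by omega
  rw [this, pow_add]
  ring

lemma f1_eq (P : Measure Ω) [IsProbabilityMeasure P] (Z : Fin n → Ω → ℝ) (t s : ℝ) :
    1 - (∑ j ∈ Finset.Icc 1 n, (-1 : ℝ) ^ (j - 1) * (n.choose j) *
        (P (cdfEvent Z 0 j t s)).toReal)
      = DS P Z 0 t s := by
  rw [DS, Finset.sum_range_one]
  simp only [Nat.sub_zero, Nat.zero_add, Nat.choose_self, Nat.cast_one, mul_one, one_mul,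
    zero_add]
  rw [range_eq_insert_Icc n, Finset.sum_insert (by simp)]
  simp only [pow_zero, one_mul, Nat.choose_zero_right, Nat.cast_one, cdfEvent_zero_zero,
    measure_univ, ENNReal.toReal_one]
  have hcong : ∑ m ∈ Finset.Icc 1 n, (-1 : ℝ) ^ m * (n.choose m) *
      (P (cdfEvent Z 0 m t s)).toReal
      = ∑ m ∈ Finset.Icc 1 n, -((-1 : ℝ) ^ (m - 1) * (n.choose m) *
        (P (cdfEvent Z 0 m t s)).toReal) := by
    refine Finset.sum_congr rfl fun m hm => ?_
    rw [neg_pow_pred hm]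
    ring
  rw [hcong, Finset.sum_neg_distrib]
  ring

lemma f2_term_eq (P : Measure Ω) [IsProbabilityMeasure P] (Z : Fin n → Ω → ℝ) (t s : ℝ)
    (i : ℕ) :
    (P (cdfEvent Z 0 i t s)).toReal
      - (∑ j ∈ Finset.Icc 1 i, (-1 : ℝ) ^ (j + 1) * (i.choose j) *
          (P (cdfEvent Z j i t s)).toReal)
      - (∑ j ∈ Finset.Icc 1 (n - i), (-1 : ℝ) ^ (j + 1) * ((n - i).choose j) *
          (P (cdfEvent Z 0 (i + j) t s)).toReal)
      + ∑ j ∈ Finset.Icc 1 i, ∑ m ∈ Finset.Icc 1 (n - i),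
          (-1 : ℝ) ^ (j + m) * (i.choose j) * ((n - i).choose m) *
            (P (cdfEvent Z j (i + m) t s)).toReal
      = DS P Z i t s := by
  have h0 : ∑ m ∈ Finset.range (n - i + 1), (-1 : ℝ) ^ (0 + m) * (i.choose 0) *
        ((n - i).choose m) * (P (cdfEvent Z 0 (i + m) t s)).toReal
      = (P (cdfEvent Z 0 i t s)).toReal
        - ∑ m ∈ Finset.Icc 1 (n - i), (-1 : ℝ) ^ (m + 1) * ((n - i).choose m) *
            (P (cdfEvent Z 0 (i + m) t s)).toReal := by
    rw [range_eq_insert_Icc (n - i), Finset.sum_insert (by simp)]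
    simp only [Nat.add_zero, Nat.zero_add, Nat.choose_zero_right, Nat.cast_one, pow_zero,
      one_mul, mul_one]
    have hcong : ∑ m ∈ Finset.Icc 1 (n - i), (-1 : ℝ) ^ m *
          ((n - i).choose m) * (P (cdfEvent Z 0 (i + m) t s)).toReal
        = ∑ m ∈ Finset.Icc 1 (n - i), -((-1 : ℝ) ^ (m + 1) * ((n - i).choose m) *
            (P (cdfEvent Z 0 (i + m) t s)).toReal) := by
      refine Finset.sum_congr rfl fun m hm => ?_
      rw [pow_succ]
      ring
    rw [hcong, Finset.sum_neg_distrib]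
    ring
  have hj : ∀ j ∈ Finset.Icc 1 i,
      ∑ m ∈ Finset.range (n - i + 1), (-1 : ℝ) ^ (j + m) * (i.choose j) *
          ((n - i).choose m) * (P (cdfEvent Z j (i + m) t s)).toReal
      = -((-1 : ℝ) ^ (j + 1) * (i.choose j) * (P (cdfEvent Z j i t s)).toReal)
        + ∑ m ∈ Finset.Icc 1 (n - i), (-1 : ℝ) ^ (j + m) * (i.choose j) *
            ((n - i).choose m) * (P (cdfEvent Z j (i + m) t s)).toReal := by
    intro j hj
    rw [range_eq_insert_Icc (n - i), Finset.sum_insert (by simp)]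
    congr 1
    simp only [Nat.add_zero, Nat.choose_zero_right, Nat.cast_one, mul_one]
    rw [pow_succ]
    ring
  rw [DS, range_eq_insert_Icc i, Finset.sum_insert (by simp), h0,
    Finset.sum_congr rfl hj, Finset.sum_add_distrib, Finset.sum_neg_distrib]
  ring


end MRL

open MRL in
theorem mrl_order_statistic_given_min_exchangeable
    {Ω : Type*} [MeasurableSpace Ω] (P : Measure Ω) [IsProbabilityMeasure P]
    (n k : ℕ) (hn : 1 ≤ n) (hk1 : 1 ≤ k) (hkn : k ≤ n)
    (Z : Fin n → Ω → ℝ) (hZm : ∀ i, Measurable (Z i))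
    (hZint : ∀ i, Integrable (Z i) P)
    (hexch : ∀ σ : Equiv.Perm (Fin n),
      Measure.map (fun ω => fun i => Z (σ i) ω) P = Measure.map (fun ω => fun i => Z i ω) P)
    (t : ℝ) (ht : 0 ≤ t)
    (hpos : 0 < (P {ω | t < orderStat Z 1 ω}).toReal) :
    (∫ ω in {ω | t < orderStat Z 1 ω}, (orderStat Z (n - k + 1) ω - t) ∂P)
        / (P {ω | t < orderStat Z 1 ω}).toReal
      = (1 / (P {ω | t < orderStat Z 1 ω}).toReal) *
          (∫ x in Set.Ioi (0 : ℝ),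
            (1 - ∑ j ∈ Finset.Icc 1 n, (-1 : ℝ) ^ (j - 1) * (n.choose j) *
              (P (cdfEvent Z 0 j t (t + x))).toReal))
        + (1 / (P {ω | t < orderStat Z 1 ω}).toReal) *
          (∫ x in Set.Ioi (0 : ℝ),
            ∑ i ∈ Finset.Icc 1 (n - k), (n.choose i : ℝ) *
              ((P (cdfEvent Z 0 i t (t + x))).toReal
                - (∑ j ∈ Finset.Icc 1 i, (-1 : ℝ) ^ (j + 1) * (i.choose j) *
                    (P (cdfEvent Z j i t (t + x))).toReal)
                - (∑ j ∈ Finset.Icc 1 (n - i), (-1 : ℝ) ^ (j + 1) * ((n - i).choose j) *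
                    (P (cdfEvent Z 0 (i + j) t (t + x))).toReal)
                + ∑ j ∈ Finset.Icc 1 i, ∑ m ∈ Finset.Icc 1 (n - i),
                    (-1 : ℝ) ^ (j + m) * (i.choose j) * ((n - i).choose m) *
                      (P (cdfEvent Z j (i + m) t (t + x))).toReal)) := by
  classical
  have hj1 : 1 ≤ n - k + 1 := by omega
  have hjn : n - k + 1 ≤ n := by omega
  set A : Set Ω := {ω | t < orderStat Z 1 ω} with hA
  set g : Ω → ℝ := orderStat Z (n - k + 1) with hg
  -- A as intersection
  have hA_iff : ∀ ω, ω ∈ A ↔ ∀ l, t < Z l ω := by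
    intro ω
    rw [hA, Set.mem_setOf_eq, orderStat_lt_iff Z le_rfl hn ω t, Nat.lt_one_iff,
      Finset.card_eq_zero, Finset.filter_eq_empty_iff]
    simp [not_le]
  have hAm : MeasurableSet A := by
    have : A = ⋂ l, Z l ⁻¹' Set.Ioi t := by
      ext ω; rw [hA_iff ω]; simp
    rw [this]
    exact MeasurableSet.iInter fun l => (hZm l) measurableSet_Ioi
  -- counting function measurable
  have hNm : ∀ s : ℝ, Measurable fun ω => (Finset.univ.filter fun l : Fin n => Z l ω ≤ s).card := by
    intro s
    have : (fun ω => (Finset.univ.filter fun l : Fin n => Z l ω ≤ s).card)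
        = fun ω => ∑ l : Fin n, if Z l ω ≤ s then 1 else 0 := by
      funext ω; rw [Finset.card_filter]
    rw [this]
    exact Finset.measurable_sum _ fun l _ =>
      Measurable.ite ((hZm l) measurableSet_Iic) measurable_const measurable_const
  have hg_meas : Measurable g := by
    apply measurable_of_Ioi
    intro s
    have : g ⁻¹' Set.Ioi s
        = (fun ω => (Finset.univ.filter fun l : Fin n => Z l ω ≤ s).card) ⁻¹'
            (Set.Iio (n - k + 1)) := by
      ext ω
      simp only [Set.mem_preimage, Set.mem_Ioi, Set.mem_Iio]
      exact orderStat_lt_iff Z hj1 hjn ω s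
    rw [this]
    exact (hNm s) measurableSet_Iio
  have hg_bound : ∀ ω, ‖g ω‖ ≤ ∑ l : Fin n, |Z l ω| := by
    intro ω
    have hlen : ((List.ofFn fun i => Z i ω).mergeSort (fun x y => x ≤ y)).length = n := by simp
    have hmlt : n - k + 1 - 1 < ((List.ofFn fun i => Z i ω).mergeSort (fun x y => x ≤ y)).length := by
      rw [hlen]; omega
    have hmem : g ω ∈ (List.ofFn fun i => Z i ω) := by
      rw [hg]
      unfold orderStat
      rw [List.getD_eq_get _ 0 ⟨n - k + 1 - 1, hmlt⟩]
      exact List.mem_mergeSort.1 (List.get_mem _ _)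
    rw [List.mem_ofFn] at hmem
    obtain ⟨l₀, hl₀⟩ := hmem
    rw [← hl₀]
    calc ‖Z l₀ ω‖ = |Z l₀ ω| := rfl
      _ ≤ ∑ l : Fin n, |Z l ω| :=
        Finset.single_le_sum (fun l _ => abs_nonneg (Z l ω)) (Finset.mem_univ l₀)
  have hg_int : Integrable g P := by
    refine Integrable.mono' (integrable_finset_sum _ fun l _ => (hZint l).abs)
      hg_meas.aestronglyMeasurable (ae_of_all _ hg_bound)
  set F : Ω → ℝ := A.indicator (fun ω => g ω - t) with hF
  have hF_int : Integrable F P := (hg_int.sub (integrable_const t)).indicator hAm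
  have hF_nn : 0 ≤ᵐ[P] F := by
    refine ae_of_all _ fun ω => ?_
    by_cases hω : ω ∈ A
    · rw [hF, Set.indicator_of_mem hω]
      have : t < g ω := by
        rw [hg, orderStat_lt_iff Z hj1 hjn ω t]
        have : (Finset.univ.filter fun l : Fin n => Z l ω ≤ t) = ∅ := by
          rw [Finset.filter_eq_empty_iff]
          exact fun l _ => not_le.2 ((hA_iff ω).1 hω l)
        rw [this]
        simp
      simp only [Pi.zero_apply]
      linarith
    · rw [hF, Set.indicator_of_notMem hω]
      simp
  have hnum : ∫ ω in A, (g ω - t) ∂P = ∫ ω, F ω ∂P := (integral_indicator hAm).symm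
  -- tail sets
  have htail : ∀ x : ℝ, 0 < x → {a | x < F a}
      = {ω | (∀ l, t < Z l ω) ∧ t + x < orderStat Z (n - k + 1) ω} := by
    intro x hx
    ext ω
    simp only [Set.mem_setOf_eq]
    by_cases hω : ω ∈ A
    · rw [hF, Set.indicator_of_mem hω]
      constructor
      · intro h; exact ⟨(hA_iff ω).1 hω, by rw [← hg]; linarith⟩
      · rintro ⟨_, h⟩; rw [← hg] at h; linarith
    · rw [hF, Set.indicator_of_notMem hω]
      constructor
      · intro h; linarith
      · rintro ⟨h, _⟩; exact absurd ((hA_iff ω).2 h) hω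
  -- the layer-cake identity
  have hlayer : ∫ ω, F ω ∂P = ∫ x in Set.Ioi (0:ℝ), (P {a | x < F a}).toReal :=
    hF_int.integral_eq_integral_meas_lt hF_nn
  -- total tail function
  set ftot : ℝ → ℝ := fun x => (P {a | x < F a}).toReal with hftot
  have hftot_anti : Antitone ftot := fun a b hab =>
    ENNReal.toReal_mono (measure_ne_top P _)
      (measure_mono fun ω h => lt_of_le_of_lt hab h)
  have hftot_int : IntegrableOn ftot (Set.Ioi 0) volume := by
    have hlc := lintegral_eq_lintegral_meas_lt P hF_nn hF_int.aemeasurable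
    have hne : ∫⁻ x in Set.Ioi (0:ℝ), P {a | x < F a} ≠ ⊤ := by
      rw [← hlc]
      exact hF_int.lintegral_lt_top.ne
    have hmeasP : Measurable fun x : ℝ => P {a | x < F a} :=
      Antitone.measurable (f := fun x : ℝ => P {a | x < F a})
        (fun a b hab => measure_mono fun ω h => lt_of_le_of_lt hab h)
    exact integrable_toReal_of_lintegral_ne_top hmeasP.aemeasurable hne
  -- pointwise identity on Ioi 0
  have htot_eq : ∀ x ∈ Set.Ioi (0:ℝ), ftot x
      = ∑ i ∈ Finset.range (n - k + 1), (n.choose i : ℝ) * DS P Z i t (t + x) := by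
    intro x hx
    rw [hftot]
    simp only []
    rw [htail x hx]
    exact measure_event_eq P Z hZm hexch k hn hk1 hkn t x hx
  -- define the two integrands
  set f1 : ℝ → ℝ := fun x => 1 - ∑ j ∈ Finset.Icc 1 n, (-1 : ℝ) ^ (j - 1) * (n.choose j) *
      (P (cdfEvent Z 0 j t (t + x))).toReal with hf1
  set f2 : ℝ → ℝ := fun x => ∑ i ∈ Finset.Icc 1 (n - k), (n.choose i : ℝ) *
      ((P (cdfEvent Z 0 i t (t + x))).toReal
        - (∑ j ∈ Finset.Icc 1 i, (-1 : ℝ) ^ (j + 1) * (i.choose j) *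
            (P (cdfEvent Z j i t (t + x))).toReal)
        - (∑ j ∈ Finset.Icc 1 (n - i), (-1 : ℝ) ^ (j + 1) * ((n - i).choose j) *
            (P (cdfEvent Z 0 (i + j) t (t + x))).toReal)
        + ∑ j ∈ Finset.Icc 1 i, ∑ m ∈ Finset.Icc 1 (n - i),
            (-1 : ℝ) ^ (j + m) * (i.choose j) * ((n - i).choose m) *
              (P (cdfEvent Z j (i + m) t (t + x))).toReal) with hf2
  have hf1_ds : ∀ x : ℝ, f1 x = DS P Z 0 t (t + x) := fun x => f1_eq P Z t (t + x)
  have hf2_ds : ∀ x : ℝ, f2 x = ∑ i ∈ Finset.Icc 1 (n - k), (n.choose i : ℝ) *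
      DS P Z i t (t + x) := by
    intro x
    rw [hf2]
    exact Finset.sum_congr rfl fun i _ => by rw [f2_term_eq P Z t (t + x) i]
  have hsplit : ∀ x ∈ Set.Ioi (0:ℝ), ftot x = f1 x + f2 x := by
    intro x hx
    rw [htot_eq x hx, hf1_ds x, hf2_ds x, range_eq_insert_Icc (n - k),
      Finset.sum_insert (by simp)]
    simp
  -- monotonicity-based measurability of q-functions
  have hq_mono : ∀ j i : ℕ, Monotone fun x : ℝ => (P (cdfEvent Z j i t (t + x))).toReal := by
    intro j i a b hab
    refine ENNReal.toReal_mono (measure_ne_top P _) (measure_mono fun ω hω => ?_)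
    intro l
    exact ⟨fun h => (hω l).1 h, fun h1 h2 => le_trans ((hω l).2 h1 h2) (by linarith)⟩
  have hq_meas : ∀ j i : ℕ, Measurable fun x : ℝ => (P (cdfEvent Z j i t (t + x))).toReal :=
    fun j i => (hq_mono j i).measurable
  have hf1_meas : Measurable f1 := by
    rw [hf1]
    exact (measurable_const.sub
      (Finset.measurable_sum _ fun j _ => (hq_meas 0 j).const_mul _))
  have hf2_meas : Measurable f2 := by
    rw [hf2]
    refine Finset.measurable_sum _ fun i _ => Measurable.const_mul ?_ _
    refine Measurable.add ?_ (Finset.measurable_sum _ fun j _ =>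
      Finset.measurable_sum _ fun m _ => (hq_meas j (i + m)).const_mul _)
    refine Measurable.sub ?_ (Finset.measurable_sum _ fun j _ => (hq_meas 0 (i + j)).const_mul _)
    exact (hq_meas 0 i).sub (Finset.measurable_sum _ fun j _ => (hq_meas j i).const_mul _)
  -- nonnegativity and bounds on Ioi 0
  have hET0 : ∀ x ∈ Set.Ioi (0:ℝ), f1 x = (P (ET Z ∅ t (t + x))).toReal := by
    intro x hx
    rw [Set.mem_Ioi] at hx
    have h := toReal_measure_ET P Z hZm hexch ∅ t (t + x) (by linarith)
    rw [Finset.card_empty] at h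
    rw [hf1_ds x, ← h]
  have hf1_nn : ∀ x ∈ Set.Ioi (0:ℝ), 0 ≤ f1 x := by
    intro x hx
    rw [hET0 x hx]
    exact ENNReal.toReal_nonneg
  have hf1_le : ∀ x ∈ Set.Ioi (0:ℝ), f1 x ≤ ftot x := by
    intro x hx
    have hx' : 0 < x := Set.mem_Ioi.1 hx
    have hsub : ET Z ∅ t (t + x) ⊆ {a | x < F a} := by
      rw [htail x hx', event_biUnion Z k hn hk1 hkn t x hx']
      intro ω hω
      exact Set.mem_iUnion₂.2 ⟨∅, Finset.mem_filter.2 ⟨Finset.empty_mem_powerset _, by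
        rw [Finset.card_empty]; omega⟩, hω⟩
    rw [hET0 x hx, hftot]
    exact ENNReal.toReal_mono (measure_ne_top P _) (measure_mono hsub)
  have hf2_nn : ∀ x ∈ Set.Ioi (0:ℝ), 0 ≤ f2 x := by
    intro x hx
    have hx' : 0 < x := Set.mem_Ioi.1 hx
    rw [hf2_ds x]
    refine Finset.sum_nonneg fun i _ => ?_
    rw [← sum_ET_eq P Z hZm hexch i t (t + x) (by linarith)]
    exact Finset.sum_nonneg fun T _ => ENNReal.toReal_nonneg
  have hf2_le : ∀ x ∈ Set.Ioi (0:ℝ), f2 x ≤ ftot x := by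
    intro x hx
    have h1 := hsplit x hx
    have h2 := hf1_nn x hx
    linarith
  have hf1_int : IntegrableOn f1 (Set.Ioi 0) volume := by
    refine Integrable.mono' hftot_int hf1_meas.aestronglyMeasurable ?_
    refine (ae_restrict_iff' measurableSet_Ioi).2 (ae_of_all _ fun x hx => ?_)
    rw [Real.norm_eq_abs, abs_of_nonneg (hf1_nn x hx)]
    exact hf1_le x hx
  have hf2_int : IntegrableOn f2 (Set.Ioi 0) volume := by
    refine Integrable.mono' hftot_int hf2_meas.aestronglyMeasurable ?_
    refine (ae_restrict_iff' measurableSet_Ioi).2 (ae_of_all _ fun x hx => ?_)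
    rw [Real.norm_eq_abs, abs_of_nonneg (hf2_nn x hx)]
    exact hf2_le x hx
  have hcongr : ∫ x in Set.Ioi (0:ℝ), ftot x = ∫ x in Set.Ioi (0:ℝ), (f1 x + f2 x) :=
    integral_congr_ae ((ae_restrict_iff' measurableSet_Ioi).2 (ae_of_all _ hsplit))
  have hsum : ∫ x in Set.Ioi (0:ℝ), (f1 x + f2 x)
      = (∫ x in Set.Ioi (0:ℝ), f1 x) + ∫ x in Set.Ioi (0:ℝ), f2 x :=
    integral_add hf1_int hf2_int
  rw [hnum, hlayer]
  rw [show (integral (volume.restrict (Set.Ioi 0)) ftot) = ∫ x in Set.Ioi (0:ℝ), ftot x from rfl,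
    hcongr, hsum]
  ring
end
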